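/- arXiv:2010.02126 — 10 statements merged into one kernel-verified Lean document; each statement's English description precedes it below -/
import Mathlib

section
/- For all u in the open interval (3/4, 3/2), the function φ(u) = u − log u − 1 satisfies |φ(u) − (1/2)(1/u − 1)²| ≤ (6/5)|1/u − 1|³. -/
set_option maxHeartbeats 1600000 in
/-- For all `u ∈ (3/4, 3/2)`, the function `φ(u) = u − log u − 1` satisfies
`|φ(u) − (1/2)(1/u − 1)²| ≤ (6/5)|1/u − 1|³`. -/
theorem stmt2 (u : ℝ) (hu : u ∈ Set.Ioo (3 / 4 : ℝ) (3 / 2)) :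
    |(u - Real.log u - 1) - (1 / 2) * (1 / u - 1) ^ 2| ≤ (6 / 5) * |1 / u - 1| ^ 3 := by
  obtain ⟨h1, h2⟩ := hu
  have hu0 : (0:ℝ) < u := by linarith
  have hune : u ≠ 0 := ne_of_gt hu0
  obtain ⟨x, hxdef⟩ : ∃ x : ℝ, x = 1 - 1/u := ⟨_, rfl⟩
  have hinv1 : (2:ℝ)/3 < 1/u := by rw [lt_div_iff₀ hu0]; linarith
  have hinv2 : 1/u < (4:ℝ)/3 := by rw [div_lt_iff₀ hu0]; linarith
  have hxlt : x < 1/3 := by rw [hxdef]; linarith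
  have hxgt : -(1/3) < x := by rw [hxdef]; linarith
  have habs : |x| < 1 := abs_lt.2 ⟨by linarith, by linarith⟩
  have h1x : (0:ℝ) < 1 - x := by linarith
  have hux : u * (1 - x) = 1 := by rw [hxdef]; field_simp; ring
  have hlog : Real.log (1 - x) = - Real.log u := by
    have h : (1:ℝ) - x = 1/u := by rw [hxdef]; ring
    rw [h, one_div, Real.log_inv]
  have hx3 : |1/u - 1| = |x| := by
    rw [show (1:ℝ)/u - 1 = -x by rw [hxdef]; ring, abs_neg]
  have hu1 : u - 1 = u * x := by nlinarith [hux]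
  have hu2 : (3:ℝ)*u - 1 = u*(2+x) := by nlinarith [hux]
  have hMx : (u-1)^3*(3*u-1)/(3*u^3) = u * (x^3*(2+x)) / 3 := by
    rw [hu1, hu2]; field_simp
  have hident : (u - Real.log u - 1) - (1 / 2) * (1 / u - 1) ^ 2
      = (u-1)^3*(3*u-1)/(3*u^3) + ((x + x^2/2 + x^3/3) - Real.log u) := by
    rw [hxdef]; field_simp; ring
  rcases le_or_gt 1 u with hcase | hcase
  · -- u ≥ 1, x ∈ [0,1/3)
    have hx0 : 0 ≤ x := by
      rw [hxdef]
      have : 1/u ≤ 1 := by rw [div_le_one hu0]; linarith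
      linarith
    have habsx : |x| = x := abs_of_nonneg hx0
    have hE := Real.abs_log_sub_add_sum_range_le habs 5
    rw [hlog, habsx] at hE
    have hsum : (∑ i ∈ Finset.range 5, x ^ (i + 1) / (i + 1))
        = x + x^2/2 + x^3/3 + x^4/4 + x^5/5 := by
      simp [Finset.sum_range_succ]; ring
    rw [hsum] at hE
    have hD : x ^ (5+1) / (1 - x) ≤ (3/2) * x^6 := by
      rw [div_le_iff₀ h1x]
      nlinarith [pow_nonneg hx0 6]
    rw [abs_le] at hE
    obtain ⟨hE1, hE2⟩ := hE
    have hE2' : x + x^2/2 + x^3/3 + x^4/4 + x^5/5 - Real.log u ≤ (3/2) * x^6 := by linarith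
    have hE1' : -((3/2) * x^6) ≤ x + x^2/2 + x^3/3 + x^4/4 + x^5/5 - Real.log u := by linarith
    rw [hident, hMx, hx3, habsx, abs_le]
    clear hsum hE1 hE2 hD hident hMx hlog hx3
    have hnn : 0 ≤ x^3*(2+x) := by positivity
    have hMub : u * (x^3*(2+x)) / 3 ≤ x^3 + x^4/2 := by
      nlinarith [mul_nonneg (by linarith : (0:ℝ) ≤ 3/2 - u) hnn]
    have hMlb : 0 ≤ u * (x^3*(2+x)) / 3 := by positivity
    have p34 : 0 ≤ x^3 * (1/3 - x) := mul_nonneg (pow_nonneg hx0 3) (by linarith)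
    have p45 : 0 ≤ x^4 * (1/3 - x) := mul_nonneg (pow_nonneg hx0 4) (by linarith)
    have p56 : 0 ≤ x^5 * (1/3 - x) := mul_nonneg (pow_nonneg hx0 5) (by linarith)
    have aux1 : x^4/4 + (3/2)*x^6 ≤ x^3/5 + x^5/5 := by nlinarith [p34, p45, p56]
    have aux2 : x^4/4 + x^5/5 + (3/2)*x^6 ≤ (6/5)*x^3 := by nlinarith [p34, p45, p56]
    constructor
    · linarith
    · linarith
  · -- u < 1, x ∈ (-1/3, 0)
    have hx0 : x < 0 := by
      rw [hxdef]
      have : 1 < 1/u := by rw [lt_div_iff₀ hu0]; linarith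
      linarith
    have hnx : 0 < -x := neg_pos.2 hx0
    have habsx : |x| = -x := abs_of_neg hx0
    have hE := Real.abs_log_sub_add_sum_range_le habs 3
    rw [hlog, habsx] at hE
    have hsum : (∑ i ∈ Finset.range 3, x ^ (i + 1) / (i + 1))
        = x + x^2/2 + x^3/3 := by
      simp [Finset.sum_range_succ]; ring
    rw [hsum] at hE
    have h1px : (0:ℝ) < 1 - -x := by linarith
    have hD : (-x) ^ (3+1) / (1 - -x) ≤ (3/2) * x^4 := by
      rw [div_le_iff₀ h1px]
      nlinarith [pow_nonneg hnx.le 4]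
    rw [abs_le] at hE
    obtain ⟨hE1, hE2⟩ := hE
    have hy3 : 0 < (-x)^3 := pow_pos hnx 3
    have hy4 : (3/2)*x^4 ≤ (1/2)*(-x)^3 := by
      nlinarith [mul_nonneg hy3.le (by linarith : (0:ℝ) ≤ 1/3 + x)]
    have hE2' : x + x^2/2 + x^3/3 - Real.log u ≤ (1/2)*(-x)^3 := by linarith
    have hE1' : -((1/2)*(-x)^3) ≤ x + x^2/2 + x^3/3 - Real.log u := by linarith
    rw [hident, hMx, hx3, habsx, abs_le]
    clear hsum hE1 hE2 hD hident hMx hlog hx3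
    have hMub : u * (x^3*(2+x)) / 3 ≤ 0 := by
      nlinarith [mul_nonneg hu0.le (mul_nonneg hy3.le (by linarith : (0:ℝ) ≤ 2+x))]
    have hMlb : -((2/3)*(-x)^3) ≤ u * (x^3*(2+x)) / 3 := by
      nlinarith [mul_nonneg hy3.le (by nlinarith : (0:ℝ) ≤ 2 - u*(2+x))]
    constructor
    · linarith
    · linarith
end

section
/- Let w₁,…,wₙ be nonnegative reals with sum at least n − c₁ n^{b₁}, each wᵢ ≤ 1, and each wᵢ ≥ c₂ n^{−b₂}, where 0 < b₂ < b₁ < 1, c₁ > 0, c₂ > 0. Then for all n > max{c₂^{−1/b₂}, (2c₂)^{1/b₂}}, the product ∏ᵢ wᵢ ≥ exp(−4 b₂ c₁ n^{b₁} log n). -/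
/-- If `w₁,…,wₙ ∈ [0,1]` have sum at least `n − c₁ n^{b₁}` and each `wᵢ ≥ c₂ n^{−b₂}`,
with `0 < b₂ < b₁ < 1`, `c₁ > 0`, `c₂ > 0`, then for all
`n > max{c₂^{−1/b₂}, (2c₂)^{1/b₂}}`, `∏ᵢ wᵢ ≥ exp(−4 b₂ c₁ n^{b₁} log n)`. -/
theorem stmt4 (n : ℕ) (w : Fin n → ℝ) (c₁ c₂ b₁ b₂ : ℝ)
    (hb₂ : 0 < b₂) (hb : b₂ < b₁) (hb₁ : b₁ < 1) (hc₁ : 0 < c₁) (hc₂ : 0 < c₂)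
    (hw0 : ∀ i, 0 ≤ w i) (hw1 : ∀ i, w i ≤ 1)
    (hwlo : ∀ i, c₂ * (n : ℝ) ^ (-b₂) ≤ w i)
    (hsum : (n : ℝ) - c₁ * (n : ℝ) ^ b₁ ≤ ∑ i, w i)
    (hn : max (c₂ ^ (-(1 / b₂))) ((2 * c₂) ^ (1 / b₂)) < (n : ℝ)) :
    Real.exp (-(4 * b₂ * c₁ * (n : ℝ) ^ b₁ * Real.log n)) ≤ ∏ i, w i := by
  have h1 : c₂ ^ (-(1 / b₂)) < (n : ℝ) := lt_of_le_of_lt (le_max_left _ _) hn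
  have h2 : (2 * c₂) ^ (1 / b₂) < (n : ℝ) := lt_of_le_of_lt (le_max_right _ _) hn
  have hnpos : (0 : ℝ) < n := lt_trans (Real.rpow_pos_of_pos hc₂ _) h1
  have hb₂ne : b₂ ≠ 0 := hb₂.ne'
  -- raise to power b₂
  have hA : c₂⁻¹ < (n : ℝ) ^ b₂ := by
    have := Real.rpow_lt_rpow (Real.rpow_pos_of_pos hc₂ _).le h1 hb₂
    rwa [← Real.rpow_mul hc₂.le, neg_mul, one_div, inv_mul_cancel₀ hb₂ne,
      Real.rpow_neg_one] at this
  have hB : 2 * c₂ < (n : ℝ) ^ b₂ := by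
    have := Real.rpow_lt_rpow (Real.rpow_pos_of_pos (by linarith) _).le h2 hb₂
    rwa [← Real.rpow_mul (by linarith : (0:ℝ) ≤ 2 * c₂), one_div,
      inv_mul_cancel₀ hb₂ne, Real.rpow_one] at this
  have hn1 : (1 : ℝ) < n := by
    by_contra h
    push_neg at h
    have hle : (n : ℝ) ^ b₂ ≤ 1 := Real.rpow_le_one hnpos.le h hb₂.le
    have h3 : c₂⁻¹ * c₂ = 1 := inv_mul_cancel₀ hc₂.ne'
    nlinarith [mul_pos hc₂ hc₂]
  have hL : 0 < Real.log n := Real.log_pos hn1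
  set δ : ℝ := c₂ * (n : ℝ) ^ (-b₂) with hδ
  have hnb : (0 : ℝ) < (n : ℝ) ^ b₂ := Real.rpow_pos_of_pos hnpos _
  have hδpos : 0 < δ := mul_pos hc₂ (Real.rpow_pos_of_pos hnpos _)
  have hδhalf : δ ≤ 1 / 2 := by
    rw [hδ, Real.rpow_neg hnpos.le]
    rw [← div_eq_mul_inv, div_le_div_iff₀ hnb (by norm_num)]
    linarith
  have hδlt1 : δ < 1 := by linarith
  have hlogδneg : Real.log δ < 0 := Real.log_neg hδpos hδlt1
  have hlogδ : -(2 * b₂ * Real.log n) ≤ Real.log δ := by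
    have h5 : Real.log (c₂⁻¹) < Real.log ((n : ℝ) ^ b₂) :=
      Real.log_lt_log (inv_pos.mpr hc₂) hA
    rw [Real.log_inv, Real.log_rpow hnpos] at h5
    rw [hδ, Real.log_mul hc₂.ne' (Real.rpow_pos_of_pos hnpos _).ne',
      Real.log_rpow hnpos]
    nlinarith
  -- pointwise bound
  have key : ∀ i, -(4 * b₂ * Real.log n) * (1 - w i) ≤ Real.log (w i) := by
    intro i
    set x := w i with hx
    have hx0 : δ ≤ x := hwlo i
    have hx1 : x ≤ 1 := hw1 i
    have h1δ : (0 : ℝ) < 1 - δ := by linarith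
    set t : ℝ := (1 - x) / (1 - δ) with ht
    have ht0 : 0 ≤ t := div_nonneg (by linarith) h1δ.le
    have ht1 : 0 ≤ 1 - t := by
      rw [ht, sub_nonneg, div_le_one h1δ]
      linarith
    have hcomb : t * δ + (1 - t) * 1 = x := by
      rw [ht]; field_simp; ring
    have hcon := (strictConcaveOn_log_Ioi.concaveOn).2
      (Set.mem_Ioi.mpr hδpos) (Set.mem_Ioi.mpr one_pos) ht0 ht1 (by ring)
    simp only [smul_eq_mul, Real.log_one, mul_zero, add_zero, hcomb] at hcon
    -- hcon : t * Real.log δ ≤ Real.log x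
    have ht2 : t ≤ 2 * (1 - x) := by
      rw [ht, div_le_iff₀ h1δ]
      nlinarith
    have step1 : 2 * (1 - x) * Real.log δ ≤ t * Real.log δ :=
      mul_le_mul_of_nonpos_right ht2 hlogδneg.le
    have step2 : -(4 * b₂ * Real.log n) * (1 - x) ≤ 2 * (1 - x) * Real.log δ := by
      have := mul_le_mul_of_nonneg_left hlogδ (by linarith : (0:ℝ) ≤ 2 * (1 - x))
      nlinarith
    linarith
  have hwpos : ∀ i, 0 < w i := fun i => lt_of_lt_of_le hδpos (hwlo i)
  have hsumlog : -(4 * b₂ * c₁ * (n : ℝ) ^ b₁ * Real.log n) ≤ ∑ i, Real.log (w i) := by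
    have hs : ∑ i, -(4 * b₂ * Real.log n) * (1 - w i) ≤ ∑ i, Real.log (w i) :=
      Finset.sum_le_sum fun i _ => key i
    have hrw : ∑ i, -(4 * b₂ * Real.log n) * (1 - w i)
        = -(4 * b₂ * Real.log n) * ((n : ℝ) - ∑ i, w i) := by
      rw [← Finset.mul_sum, Finset.sum_sub_distrib, Finset.sum_const,
        Finset.card_univ, Fintype.card_fin, nsmul_eq_mul, mul_one]
    rw [hrw] at hs
    have hd : (n : ℝ) - ∑ i, w i ≤ c₁ * (n : ℝ) ^ b₁ := by linarith
    nlinarith [hL, hb₂]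
  calc Real.exp (-(4 * b₂ * c₁ * (n : ℝ) ^ b₁ * Real.log n))
      ≤ Real.exp (∑ i, Real.log (w i)) := Real.exp_le_exp.mpr hsumlog
    _ = ∏ i, w i := by
        rw [Real.exp_sum]
        exact Finset.prod_congr rfl fun i _ => Real.exp_log (hwpos i)
end

section
/- For the Matérn spectral density f_{σ,α}(ω) = C·σ²α^{2ν}/(α² + ‖ω‖²)^{ν+d/2} with C = Γ(ν+d/2)/(Γ(ν)π^{d/2}), if σ²α^{2ν} = σ₀²α₀^{2ν}, then for all ω ∈ ℝ^d: min{(α₀/α)^{2ν+d}, 1} ≤ f_{σ,α}(ω)/f_{σ₀,α₀}(ω) ≤ max{(α₀/α)^{2ν+d}, 1}. -/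
/-- For the Matérn spectral density
`f_{σ,α}(ω) = [Γ(ν+d/2)/Γ(ν)]·σ²α^{2ν}/(π^{d/2}(α² + ‖ω‖²)^{ν+d/2})`,
if `σ²α^{2ν} = σ₀²α₀^{2ν}`, then for all `ω ∈ ℝ^d`:
`min{(α₀/α)^{2ν+d}, 1} ≤ f_{σ,α}(ω)/f_{σ₀,α₀}(ω) ≤ max{(α₀/α)^{2ν+d}, 1}`. -/
theorem stmt5 (ν : ℝ) (d : ℕ) (hν : 0 < ν) (hd : 1 ≤ d)
    (σ σ₀ α α₀ : ℝ) (hσ : 0 < σ) (hσ₀ : 0 < σ₀) (hα : 0 < α) (hα₀ : 0 < α₀)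
    (hmicro : σ ^ 2 * α ^ (2 * ν) = σ₀ ^ 2 * α₀ ^ (2 * ν))
    (ω : EuclideanSpace ℝ (Fin d)) :
    min ((α₀ / α) ^ (2 * ν + (d : ℝ))) 1 ≤
      (Real.Gamma (ν + (d : ℝ) / 2) / Real.Gamma ν * (σ ^ 2 * α ^ (2 * ν)) /
          (Real.pi ^ ((d : ℝ) / 2) * (α ^ 2 + ‖ω‖ ^ 2) ^ (ν + (d : ℝ) / 2))) /
        (Real.Gamma (ν + (d : ℝ) / 2) / Real.Gamma ν * (σ₀ ^ 2 * α₀ ^ (2 * ν)) /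
          (Real.pi ^ ((d : ℝ) / 2) * (α₀ ^ 2 + ‖ω‖ ^ 2) ^ (ν + (d : ℝ) / 2))) ∧
      (Real.Gamma (ν + (d : ℝ) / 2) / Real.Gamma ν * (σ ^ 2 * α ^ (2 * ν)) /
          (Real.pi ^ ((d : ℝ) / 2) * (α ^ 2 + ‖ω‖ ^ 2) ^ (ν + (d : ℝ) / 2))) /
        (Real.Gamma (ν + (d : ℝ) / 2) / Real.Gamma ν * (σ₀ ^ 2 * α₀ ^ (2 * ν)) /
          (Real.pi ^ ((d : ℝ) / 2) * (α₀ ^ 2 + ‖ω‖ ^ 2) ^ (ν + (d : ℝ) / 2)))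
        ≤ max ((α₀ / α) ^ (2 * ν + (d : ℝ))) 1 := by
  have hp : 0 < ν + (d : ℝ) / 2 := by positivity
  set p : ℝ := ν + (d : ℝ) / 2 with hpdef
  set t : ℝ := ‖ω‖ ^ 2 with htdef
  have ht : 0 ≤ t := by positivity
  have ha : (0:ℝ) < α ^ 2 + t := by positivity
  have hb : (0:ℝ) < α₀ ^ 2 + t := by positivity
  have hG : (0:ℝ) < Real.Gamma p / Real.Gamma ν :=
    div_pos (Real.Gamma_pos_of_pos hp) (Real.Gamma_pos_of_pos hν)
  have hP : (0:ℝ) < Real.pi ^ ((d : ℝ) / 2) := Real.rpow_pos_of_pos Real.pi_pos _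
  have hS : (0:ℝ) < σ₀ ^ 2 * α₀ ^ (2 * ν) := by positivity
  have hA : (0:ℝ) < (α ^ 2 + t) ^ p := Real.rpow_pos_of_pos ha _
  have hB : (0:ℝ) < (α₀ ^ 2 + t) ^ p := Real.rpow_pos_of_pos hb _
  have hratio :
      (Real.Gamma p / Real.Gamma ν * (σ ^ 2 * α ^ (2 * ν)) /
          (Real.pi ^ ((d : ℝ) / 2) * (α ^ 2 + t) ^ p)) /
        (Real.Gamma p / Real.Gamma ν * (σ₀ ^ 2 * α₀ ^ (2 * ν)) /
          (Real.pi ^ ((d : ℝ) / 2) * (α₀ ^ 2 + t) ^ p))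
        = ((α₀ ^ 2 + t) / (α ^ 2 + t)) ^ p := by
    rw [hmicro, Real.div_rpow hb.le ha.le]
    field_simp
  rw [hratio]
  have hM : (α₀ / α) ^ (2 * ν + (d : ℝ)) = (α₀ ^ 2 / α ^ 2) ^ p := by
    have h1 : α₀ ^ 2 / α ^ 2 = (α₀ / α) ^ (2 : ℕ) := (div_pow _ _ _).symm
    rw [h1, ← Real.rpow_natCast (α₀ / α) 2,
      ← Real.rpow_mul (div_pos hα₀ hα).le]
    norm_num
    ring_nf
    congr 1
    rw [hpdef]; ring
  rcases le_total (α₀ ^ 2) (α ^ 2) with h | h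
  · -- ratio between (α₀²/α²)^p and 1
    have hr1 : (α₀ ^ 2 + t) / (α ^ 2 + t) ≤ 1 := by
      rw [div_le_one ha]; linarith
    have hr2 : α₀ ^ 2 / α ^ 2 ≤ (α₀ ^ 2 + t) / (α ^ 2 + t) := by
      rw [div_le_div_iff₀ (by positivity) ha]; nlinarith
    have hr0 : 0 ≤ (α₀ ^ 2 + t) / (α ^ 2 + t) := by positivity
    constructor
    · calc min ((α₀ / α) ^ (2 * ν + (d : ℝ))) 1 ≤ (α₀ / α) ^ (2 * ν + (d : ℝ)) :=
            min_le_left _ _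
        _ = (α₀ ^ 2 / α ^ 2) ^ p := hM
        _ ≤ ((α₀ ^ 2 + t) / (α ^ 2 + t)) ^ p :=
            Real.rpow_le_rpow (by positivity) hr2 hp.le
    · calc ((α₀ ^ 2 + t) / (α ^ 2 + t)) ^ p ≤ 1 :=
            Real.rpow_le_one hr0 hr1 hp.le
        _ ≤ max ((α₀ / α) ^ (2 * ν + (d : ℝ))) 1 := le_max_right _ _
  · have hr1 : 1 ≤ (α₀ ^ 2 + t) / (α ^ 2 + t) := by
      rw [le_div_iff₀ ha]; linarith
    have hr2 : (α₀ ^ 2 + t) / (α ^ 2 + t) ≤ α₀ ^ 2 / α ^ 2 := by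
      rw [div_le_div_iff₀ ha (by positivity)]; nlinarith
    constructor
    · calc min ((α₀ / α) ^ (2 * ν + (d : ℝ))) 1 ≤ 1 := min_le_right _ _
        _ ≤ ((α₀ ^ 2 + t) / (α ^ 2 + t)) ^ p :=
            Real.one_le_rpow hr1 hp.le
    · calc ((α₀ ^ 2 + t) / (α ^ 2 + t)) ^ p ≤ (α₀ ^ 2 / α ^ 2) ^ p :=
            Real.rpow_le_rpow (by positivity) hr2 hp.le
        _ = (α₀ / α) ^ (2 * ν + (d : ℝ)) := hM.symm
        _ ≤ max ((α₀ / α) ^ (2 * ν + (d : ℝ))) 1 := le_max_left _ _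
end

section
/- With the Matérn spectral density and the microergodic constraint σ²α^{2ν} = σ₀²α₀^{2ν} and ν + d/2 ≥ 1, for all ω ∈ ℝ^d: |f_{σ,α}(ω)/f_{σ₀,α₀}(ω) − 1| ≤ (2ν+d)·max(α₀², α²)·max(α₀^{2ν+d−2}, α^{2ν+d−2}) / (α^{2ν+d−2}(α² + ‖ω‖²)). -/
open Real

lemma aux_mvt {s a b : ℝ} (hs : 1 ≤ s) (hb : 0 < b) (hab : b ≤ a) :
    a ^ s - b ^ s ≤ s * a ^ (s - 1) * (a - b) := by
  rcases eq_or_lt_of_le hab with rfl | hlt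
  · simp
  have ha : 0 < a := hb.trans_le hab
  obtain ⟨c, hc, hceq⟩ := exists_hasDerivAt_eq_slope (fun x => x ^ s)
    (fun x => s * x ^ (s - 1)) hlt
    (fun x hx => (Real.continuousAt_rpow_const x s
      (Or.inl (ne_of_gt (hb.trans_le hx.1)))).continuousWithinAt)
    (fun x hx => Real.hasDerivAt_rpow_const (Or.inl (ne_of_gt (hb.trans hx.1))))
  have hc0 : 0 < c := hb.trans hc.1
  have heq : a ^ s - b ^ s = s * c ^ (s - 1) * (a - b) :=
    (div_eq_iff (sub_ne_zero.mpr hlt.ne')).mp hceq.symm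
  rw [heq]
  have h1 : c ^ (s - 1) ≤ a ^ (s - 1) :=
    Real.rpow_le_rpow hc0.le hc.2.le (by linarith)
  have hs0 : 0 < s := by linarith
  have := mul_le_mul_of_nonneg_left h1
    (mul_nonneg hs0.le (sub_pos.mpr hlt).le)
  nlinarith [this]

lemma aux_abs {s a b : ℝ} (hs : 1 ≤ s) (ha : 0 < a) (hb : 0 < b) :
    |a ^ s - b ^ s| ≤ s * (max a b) ^ (s - 1) * |a - b| := by
  rcases le_total b a with h | h
  · rw [abs_of_nonneg (sub_nonneg.mpr (Real.rpow_le_rpow hb.le h (by linarith))),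
      abs_of_nonneg (sub_nonneg.mpr h), max_eq_left h]
    exact aux_mvt hs hb h
  · rw [abs_sub_comm, abs_sub_comm a b,
      abs_of_nonneg (sub_nonneg.mpr (Real.rpow_le_rpow ha.le h (by linarith))),
      abs_of_nonneg (sub_nonneg.mpr h), max_eq_right h]
    exact aux_mvt hs ha h

set_option maxHeartbeats 1000000 in
/-- With the Matérn spectral density and the microergodic constraint
`σ²α^{2ν} = σ₀²α₀^{2ν}` and `ν + d/2 ≥ 1`, for all `ω ∈ ℝ^d`:
`|f_{σ,α}(ω)/f_{σ₀,α₀}(ω) − 1|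
  ≤ (2ν+d)·max(α₀²,α²)·max(α₀^{2ν+d−2},α^{2ν+d−2}) / (α^{2ν+d−2}(α²+‖ω‖²))`. -/
theorem stmt6 (ν : ℝ) (d : ℕ) (hν : 0 < ν) (hd : 1 ≤ d) (hνd : 1 ≤ ν + (d : ℝ) / 2)
    (σ σ₀ α α₀ : ℝ) (hσ : 0 < σ) (hσ₀ : 0 < σ₀) (hα : 0 < α) (hα₀ : 0 < α₀)
    (hmicro : σ ^ 2 * α ^ (2 * ν) = σ₀ ^ 2 * α₀ ^ (2 * ν))
    (ω : EuclideanSpace ℝ (Fin d)) :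
    |(Real.Gamma (ν + (d : ℝ) / 2) / Real.Gamma ν * (σ ^ 2 * α ^ (2 * ν)) /
          (Real.pi ^ ((d : ℝ) / 2) * (α ^ 2 + ‖ω‖ ^ 2) ^ (ν + (d : ℝ) / 2))) /
        (Real.Gamma (ν + (d : ℝ) / 2) / Real.Gamma ν * (σ₀ ^ 2 * α₀ ^ (2 * ν)) /
          (Real.pi ^ ((d : ℝ) / 2) * (α₀ ^ 2 + ‖ω‖ ^ 2) ^ (ν + (d : ℝ) / 2))) - 1|
      ≤ (2 * ν + (d : ℝ)) * max (α₀ ^ 2) (α ^ 2) *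
          max (α₀ ^ (2 * ν + (d : ℝ) - 2)) (α ^ (2 * ν + (d : ℝ) - 2)) /
        (α ^ (2 * ν + (d : ℝ) - 2) * (α ^ 2 + ‖ω‖ ^ 2)) := by
  set t : ℝ := ‖ω‖ ^ 2 with htdef
  have ht : 0 ≤ t := sq_nonneg _
  set s : ℝ := ν + (d : ℝ) / 2 with hsdef
  have hs1 : 1 ≤ s := hνd
  have hs0 : 0 < s := lt_of_lt_of_le one_pos hs1
  have ha : (0:ℝ) < α ^ 2 + t := by positivity
  have ha0 : (0:ℝ) < α₀ ^ 2 + t := by positivity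
  have hC : (0:ℝ) < Real.Gamma s / Real.Gamma ν :=
    div_pos (Real.Gamma_pos_of_pos hs0) (Real.Gamma_pos_of_pos hν)
  have hP : (0:ℝ) < Real.pi ^ ((d : ℝ) / 2) := Real.rpow_pos_of_pos Real.pi_pos _
  have hM : (0:ℝ) < σ ^ 2 * α ^ (2 * ν) := by
    have := Real.rpow_pos_of_pos hα (2 * ν); positivity
  have has : (0:ℝ) < (α ^ 2 + t) ^ s := Real.rpow_pos_of_pos ha _
  have ha0s : (0:ℝ) < (α₀ ^ 2 + t) ^ s := Real.rpow_pos_of_pos ha0 _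
  have key : (Real.Gamma s / Real.Gamma ν * (σ ^ 2 * α ^ (2 * ν)) /
          (Real.pi ^ ((d : ℝ) / 2) * (α ^ 2 + t) ^ s)) /
        (Real.Gamma s / Real.Gamma ν * (σ₀ ^ 2 * α₀ ^ (2 * ν)) /
          (Real.pi ^ ((d : ℝ) / 2) * (α₀ ^ 2 + t) ^ s))
      = (α₀ ^ 2 + t) ^ s / (α ^ 2 + t) ^ s := by
    rw [← hmicro]
    field_simp
  rw [key, div_sub_one has.ne', abs_div, abs_of_pos has]
  -- positivity of the rpow pieces of the RHS
  have hPα : (0:ℝ) < α ^ (2 * ν + (d : ℝ) - 2) := Real.rpow_pos_of_pos hα _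
  have hK : (0:ℝ) < max (α₀ ^ (2 * ν + (d : ℝ) - 2)) (α ^ (2 * ν + (d : ℝ) - 2)) :=
    lt_max_of_lt_right hPα
  rw [div_le_div_iff₀ has (by positivity)]
  -- identities (α²)^(s-1) = α^(2ν+d-2)
  have hident : ∀ x : ℝ, 0 < x → (x ^ 2 : ℝ) ^ (s - 1) = x ^ (2 * ν + (d : ℝ) - 2) := by
    intro x hx
    rw [← Real.rpow_natCast x 2, ← Real.rpow_mul hx.le]
    congr 1
    push_cast [hsdef]
    ring
  -- step 1
  have h1 : |(α₀ ^ 2 + t) ^ s - (α ^ 2 + t) ^ s|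
      ≤ s * (max (α₀ ^ 2 + t) (α ^ 2 + t)) ^ (s - 1) * max (α₀ ^ 2) (α ^ 2) := by
    have := aux_abs hs1 ha0 ha
    have habs : |(α₀ ^ 2 + t) - (α ^ 2 + t)| ≤ max (α₀ ^ 2) (α ^ 2) := by
      rw [abs_le]
      constructor
      · nlinarith [le_max_left (α₀ ^ 2) (α ^ 2), le_max_right (α₀ ^ 2) (α ^ 2),
          sq_nonneg α₀, sq_nonneg α]
      · nlinarith [le_max_left (α₀ ^ 2) (α ^ 2), le_max_right (α₀ ^ 2) (α ^ 2),
          sq_nonneg α₀, sq_nonneg α]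
    calc |(α₀ ^ 2 + t) ^ s - (α ^ 2 + t) ^ s|
        ≤ s * (max (α₀ ^ 2 + t) (α ^ 2 + t)) ^ (s - 1) * |(α₀ ^ 2 + t) - (α ^ 2 + t)| := this
      _ ≤ s * (max (α₀ ^ 2 + t) (α ^ 2 + t)) ^ (s - 1) * max (α₀ ^ 2) (α ^ 2) := by
          apply mul_le_mul_of_nonneg_left habs
          positivity
  -- step 2
  have hMt : (0:ℝ) < max (α₀ ^ 2 + t) (α ^ 2 + t) := lt_max_of_lt_right ha
  have h2 : (max (α₀ ^ 2 + t) (α ^ 2 + t)) ^ (s - 1) * α ^ (2 * ν + (d : ℝ) - 2)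
      ≤ max (α₀ ^ (2 * ν + (d : ℝ) - 2)) (α ^ (2 * ν + (d : ℝ) - 2)) * (α ^ 2 + t) ^ (s - 1) := by
    rcases le_total α₀ α with hle | hle
    · have hsq : α₀ ^ 2 ≤ α ^ 2 := by nlinarith
      rw [max_eq_right (by linarith)]
      rw [mul_comm]
      exact mul_le_mul_of_nonneg_right (le_max_right _ _) (by positivity)
    · have hsq : α ^ 2 ≤ α₀ ^ 2 := by nlinarith
      have hexp : (0:ℝ) ≤ 2 * ν + (d : ℝ) - 2 := by
        have := hs1; rw [hsdef] at this; linarith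
      have hrp : α ^ (2 * ν + (d : ℝ) - 2) ≤ α₀ ^ (2 * ν + (d : ℝ) - 2) :=
        Real.rpow_le_rpow hα.le hle hexp
      have step : (α₀ ^ 2 + t) ^ (s - 1) * (α ^ 2 : ℝ) ^ (s - 1)
          ≤ (α₀ ^ 2 : ℝ) ^ (s - 1) * (α ^ 2 + t) ^ (s - 1) := by
        rw [← Real.mul_rpow (by positivity) (by positivity),
          ← Real.mul_rpow (by positivity) (by positivity)]
        apply Real.rpow_le_rpow (by positivity) (by nlinarith) (by linarith)
      rw [max_eq_left (by linarith : α ^ 2 + t ≤ α₀ ^ 2 + t), max_eq_left hrp,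
        ← hident α hα, ← hident α₀ hα₀]
      exact step
  have hsplit : (α ^ 2 + t) ^ (s - 1) * (α ^ 2 + t) = (α ^ 2 + t) ^ s := by
    rw [← Real.rpow_add_one ha.ne']; norm_num
  have hs2 : s ≤ 2 * ν + (d : ℝ) := by rw [hsdef]; linarith
  calc |(α₀ ^ 2 + t) ^ s - (α ^ 2 + t) ^ s| * (α ^ (2 * ν + (d : ℝ) - 2) * (α ^ 2 + t))
      ≤ (s * (max (α₀ ^ 2 + t) (α ^ 2 + t)) ^ (s - 1) * max (α₀ ^ 2) (α ^ 2)) *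
          (α ^ (2 * ν + (d : ℝ) - 2) * (α ^ 2 + t)) := by
        apply mul_le_mul_of_nonneg_right h1 (by positivity)
    _ = s * max (α₀ ^ 2) (α ^ 2) * (α ^ 2 + t) *
          ((max (α₀ ^ 2 + t) (α ^ 2 + t)) ^ (s - 1) * α ^ (2 * ν + (d : ℝ) - 2)) := by ring
    _ ≤ s * max (α₀ ^ 2) (α ^ 2) * (α ^ 2 + t) *
          (max (α₀ ^ (2 * ν + (d : ℝ) - 2)) (α ^ (2 * ν + (d : ℝ) - 2)) * (α ^ 2 + t) ^ (s - 1)) := by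
        apply mul_le_mul_of_nonneg_left h2 (by positivity)
    _ = max (α₀ ^ 2) (α ^ 2) * max (α₀ ^ (2 * ν + (d : ℝ) - 2)) (α ^ (2 * ν + (d : ℝ) - 2)) *
          ((α ^ 2 + t) ^ (s - 1) * (α ^ 2 + t)) * s := by ring
    _ ≤ max (α₀ ^ 2) (α ^ 2) * max (α₀ ^ (2 * ν + (d : ℝ) - 2)) (α ^ (2 * ν + (d : ℝ) - 2)) *
          ((α ^ 2 + t) ^ (s - 1) * (α ^ 2 + t)) * (2 * ν + (d : ℝ)) := by
        apply mul_le_mul_of_nonneg_left hs2 (by positivity)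
    _ = (2 * ν + (d : ℝ)) * max (α₀ ^ 2) (α ^ 2) *
          max (α₀ ^ (2 * ν + (d : ℝ) - 2)) (α ^ (2 * ν + (d : ℝ) - 2)) * (α ^ 2 + t) ^ s := by
        rw [← hsplit]; ring
end

section
/- Let R_{α₁}, R_{α₂} be the n×n correlation matrices of the Matérn covariance K_{α,ν} at distinct points s₁,…,sₙ in ℝ^d (d ∈ {1,2,3}), with 0 < α₁ < α₂. Then the matrix α₁^{−2ν} R_{α₁} − α₂^{−2ν} R_{α₂} is positive definite; consequently for every vector x ∈ ℝⁿ, α₂^{2ν} xᵀ R_{α₂}^{−1} x > α₁^{2ν} xᵀ R_{α₁}^{−1} x, and det(α₂^{2ν} R_{α₂}^{−1}) > det(α₁^{2ν} R_{α₁}^{−1}). -/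
open MeasureTheory Matrix

lemma pos_base {d : ℕ} {a : ℝ} (ha : 0 < a) (ω : EuclideanSpace ℝ (Fin d)) :
    0 < a ^ 2 + ‖ω‖ ^ 2 :=
  add_pos_of_pos_of_nonneg (pow_pos ha 2) (sq_nonneg _)

lemma cont_g {d : ℕ} {a p : ℝ} (ha : 0 < a) :
    Continuous (fun ω : EuclideanSpace ℝ (Fin d) => (a ^ 2 + ‖ω‖ ^ 2) ^ (-p)) := by
  refine (continuous_const.add (continuous_norm.pow 2)).rpow_const fun ω => ?_
  exact Or.inl (ne_of_gt (pos_base ha ω))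

lemma integrable_g {d : ℕ} {a p : ℝ} (ha : 0 < a) (hp : (d : ℝ) / 2 < p) :
    Integrable (fun ω : EuclideanSpace ℝ (Fin d) => (a ^ 2 + ‖ω‖ ^ 2) ^ (-p)) := by
  set m : ℝ := min (a ^ 2) 1 with hm
  have hm0 : 0 < m := lt_min (pow_pos ha 2) one_pos
  set C : ℝ := (m / 2) ^ (-p) with hC
  have hd : (Module.finrank ℝ (EuclideanSpace ℝ (Fin d)) : ℝ) < 2 * p := by
    rw [finrank_euclideanSpace_fin]
    linarith
  refine ((integrable_one_add_norm hd).const_mul C).mono'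
    (cont_g ha).aestronglyMeasurable ?_
  refine Filter.Eventually.of_forall fun ω => ?_
  set t : ℝ := ‖ω‖ with ht
  have ht0 : 0 ≤ t := norm_nonneg _
  have hX : 0 < a ^ 2 + t ^ 2 := pos_base ha ω
  have h1 : m / 2 * (1 + t) ^ 2 ≤ a ^ 2 + t ^ 2 := by
    have hma : m ≤ a ^ 2 := min_le_left _ _
    have hm1 : m ≤ 1 := min_le_right _ _
    nlinarith [sq_nonneg (1 - t), sq_nonneg t]
  have h2 : (a ^ 2 + t ^ 2) ^ (-p) ≤ (m / 2 * (1 + t) ^ 2) ^ (-p) := by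
    refine Real.rpow_le_rpow_of_nonpos ?_ h1 (by linarith : -p ≤ 0)
    positivity
  have h3 : (m / 2 * (1 + t) ^ 2) ^ (-p) = C * (1 + t) ^ (-(2 * p)) := by
    rw [Real.mul_rpow (by positivity) (by positivity), hC]
    congr 1
    rw [← Real.rpow_natCast (1 + t) 2, ← Real.rpow_mul (by linarith)]
    norm_num
  have hnn : 0 ≤ (a ^ 2 + t ^ 2) ^ (-p) := Real.rpow_nonneg hX.le _
  rw [Real.norm_eq_abs, abs_of_nonneg hnn]
  exact h3 ▸ h2

lemma matern_posdef {d n : ℕ} {ν : ℝ} (hν : 0 < ν)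
    (s : Fin n → EuclideanSpace ℝ (Fin d))
    {α₁ α₂ : ℝ} (hα₁ : 0 < α₁) (hα : α₁ < α₂)
    (f : ℝ → EuclideanSpace ℝ (Fin d) → ℝ)
    (hf : ∀ a ω, f a ω = Real.Gamma (ν + (d : ℝ) / 2) / Real.Gamma ν * a ^ (2 * ν) /
        (Real.pi ^ ((d : ℝ) / 2) * (a ^ 2 + ‖ω‖ ^ 2) ^ (ν + (d : ℝ) / 2)))
    (R : ℝ → Matrix (Fin n) (Fin n) ℝ)
    (hR : ∀ a i j, R a i j = ∫ ω, Real.cos ((inner ℝ ω (s i - s j) : ℝ)) * f a ω)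
    (hR₁ : (R α₁).PosDef) :
    (α₁ ^ (-(2 * ν)) • R α₁ - α₂ ^ (-(2 * ν)) • R α₂).PosDef := by
  have hα₂ : 0 < α₂ := lt_trans hα₁ hα
  set p : ℝ := ν + (d : ℝ) / 2 with hpdef
  have hp : (d : ℝ) / 2 < p := by rw [hpdef]; linarith
  have hp0 : 0 < p := lt_of_le_of_lt (by positivity) hp
  set c : ℝ := Real.Gamma p / Real.Gamma ν / Real.pi ^ ((d : ℝ) / 2) with hcdef
  have hc : 0 < c := by
    rw [hcdef]
    have h1 := Real.Gamma_pos_of_pos hp0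
    have h2 := Real.Gamma_pos_of_pos hν
    have h3 : (0:ℝ) < Real.pi ^ ((d : ℝ) / 2) := Real.rpow_pos_of_pos Real.pi_pos _
    positivity
  set g : ℝ → EuclideanSpace ℝ (Fin d) → ℝ :=
    fun a ω => (a ^ 2 + ‖ω‖ ^ 2) ^ (-p) with hgdef
  have hfe : ∀ a, 0 < a → ∀ ω, f a ω = a ^ (2 * ν) * (c * g a ω) := by
    intro a ha ω
    have hX : 0 < a ^ 2 + ‖ω‖ ^ 2 := pos_base ha ω
    have hXp : (0:ℝ) < (a ^ 2 + ‖ω‖ ^ 2) ^ p := Real.rpow_pos_of_pos hX _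
    have hπ : (0:ℝ) < Real.pi ^ ((d : ℝ) / 2) := Real.rpow_pos_of_pos Real.pi_pos _
    have hΓ : (0:ℝ) < Real.Gamma ν := Real.Gamma_pos_of_pos hν
    rw [hf, hgdef, hcdef]
    simp only
    rw [Real.rpow_neg hX.le]
    field_simp
  have hgint : ∀ a, 0 < a → Integrable (g a) := fun a ha => integrable_g ha hp
  have hgpos : ∀ (a : ℝ), 0 < a → ∀ ω, 0 < g a ω := fun a ha ω =>
    Real.rpow_pos_of_pos (pos_base ha ω) _
  have hgcont : ∀ (a : ℝ), 0 < a → Continuous (g a) := fun a ha => cont_g ha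
  -- integrability of cosine terms
  have hfint : ∀ a, 0 < a → ∀ v : EuclideanSpace ℝ (Fin d),
      Integrable (fun ω => Real.cos ((inner ℝ ω v : ℝ)) * f a ω) := by
    intro a ha v
    have hrw : (fun ω : EuclideanSpace ℝ (Fin d) => Real.cos ((inner ℝ ω v : ℝ)) * f a ω)
        = fun ω => Real.cos ((inner ℝ ω v : ℝ)) * (a ^ (2 * ν) * (c * g a ω)) :=
      funext fun ω => by rw [hfe a ha ω]
    rw [hrw]
    have hcont : Continuous fun ω : EuclideanSpace ℝ (Fin d) =>
        Real.cos ((inner ℝ ω v : ℝ)) * (a ^ (2 * ν) * (c * g a ω)) := by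
      exact (Real.continuous_cos.comp (continuous_id.inner continuous_const)).mul
        (continuous_const.mul (continuous_const.mul (hgcont a ha)))
    refine ((hgint a ha).const_mul (a ^ (2 * ν) * c)).mono' hcont.aestronglyMeasurable ?_
    refine Filter.Eventually.of_forall fun ω => ?_
    have hKnn : 0 ≤ a ^ (2 * ν) * (c * g a ω) := by
      have := (hgpos a ha ω).le
      positivity
    rw [Real.norm_eq_abs, abs_mul, abs_of_nonneg hKnn]
    calc |Real.cos ((inner ℝ ω v : ℝ))| * (a ^ (2 * ν) * (c * g a ω))
        ≤ 1 * (a ^ (2 * ν) * (c * g a ω)) :=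
          mul_le_mul_of_nonneg_right (Real.abs_cos_le_one _) hKnn
      _ = a ^ (2 * ν) * c * g a ω := by ring
  -- the trigonometric quadratic form
  set T : (Fin n → ℝ) → EuclideanSpace ℝ (Fin d) → ℝ := fun x ω =>
    (∑ i, x i * Real.cos ((inner ℝ ω (s i) : ℝ))) ^ 2 +
    (∑ i, x i * Real.sin ((inner ℝ ω (s i) : ℝ))) ^ 2 with hTdef
  have hTnonneg : ∀ x ω, 0 ≤ T x ω := fun x ω => by
    show 0 ≤ (∑ i, x i * Real.cos ((inner ℝ ω (s i) : ℝ))) ^ 2 +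
      (∑ i, x i * Real.sin ((inner ℝ ω (s i) : ℝ))) ^ 2
    positivity
  have hTcont : ∀ x, Continuous (T x) := by
    intro x
    show Continuous fun ω : EuclideanSpace ℝ (Fin d) =>
      (∑ i, x i * Real.cos ((inner ℝ ω (s i) : ℝ))) ^ 2 +
      (∑ i, x i * Real.sin ((inner ℝ ω (s i) : ℝ))) ^ 2
    refine Continuous.add (Continuous.pow ?_ 2) (Continuous.pow ?_ 2)
    · exact continuous_finset_sum _ fun i _ => continuous_const.mul
        (Real.continuous_cos.comp (continuous_id.inner continuous_const))
    · exact continuous_finset_sum _ fun i _ => continuous_const.mul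
        (Real.continuous_sin.comp (continuous_id.inner continuous_const))
  have hTbd : ∀ x ω, T x ω ≤ 2 * (∑ i, |x i|) ^ 2 := by
    intro x ω
    have key : ∀ u : Fin n → ℝ, (∀ i, |u i| ≤ 1) →
        (∑ i, x i * u i) ^ 2 ≤ (∑ i, |x i|) ^ 2 := by
      intro u hu
      have h1 : |∑ i, x i * u i| ≤ ∑ i, |x i| := by
        refine (Finset.abs_sum_le_sum_abs _ _).trans (Finset.sum_le_sum fun i _ => ?_)
        rw [abs_mul]
        exact mul_le_of_le_one_right (abs_nonneg _) (hu i)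
      calc (∑ i, x i * u i) ^ 2 = |∑ i, x i * u i| ^ 2 := (sq_abs _).symm
        _ ≤ (∑ i, |x i|) ^ 2 := by
            have h0 : (0:ℝ) ≤ |∑ i, x i * u i| := abs_nonneg _
            nlinarith
    show (∑ i, x i * Real.cos ((inner ℝ ω (s i) : ℝ))) ^ 2 +
      (∑ i, x i * Real.sin ((inner ℝ ω (s i) : ℝ))) ^ 2 ≤ 2 * (∑ i, |x i|) ^ 2
    have h1 := key (fun i => Real.cos ((inner ℝ ω (s i) : ℝ))) fun i => Real.abs_cos_le_one _
    have h2 := key (fun i => Real.sin ((inner ℝ ω (s i) : ℝ))) fun i => Real.abs_sin_le_one _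
    linarith
  have hTfint : ∀ a, 0 < a → ∀ x : Fin n → ℝ,
      Integrable (fun ω => T x ω * f a ω) := by
    intro a ha x
    have hrw : (fun ω => T x ω * f a ω)
        = fun ω => T x ω * (a ^ (2 * ν) * (c * g a ω)) :=
      funext fun ω => by rw [hfe a ha ω]
    rw [hrw]
    refine ((hgint a ha).const_mul (2 * (∑ i, |x i|) ^ 2 * (a ^ (2 * ν) * c))).mono'
      ((hTcont x).mul
        (continuous_const.mul (continuous_const.mul (hgcont a ha)))).aestronglyMeasurable ?_
    refine Filter.Eventually.of_forall fun ω => ?_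
    have hKnn : 0 ≤ a ^ (2 * ν) * (c * g a ω) :=
      mul_nonneg (Real.rpow_nonneg ha.le _)
        (mul_nonneg hc.le (hgpos a ha ω).le)
    have h1 : 0 ≤ T x ω * (a ^ (2 * ν) * (c * g a ω)) := mul_nonneg (hTnonneg x ω) hKnn
    rw [Real.norm_eq_abs, abs_of_nonneg h1]
    calc T x ω * (a ^ (2 * ν) * (c * g a ω))
        ≤ (2 * (∑ i, |x i|) ^ 2) * (a ^ (2 * ν) * (c * g a ω)) :=
          mul_le_mul_of_nonneg_right (hTbd x ω) hKnn
      _ = 2 * (∑ i, |x i|) ^ 2 * (a ^ (2 * ν) * c) * g a ω := by ring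
  -- trig identity
  have trig : ∀ x ω, T x ω =
      ∑ i, ∑ j, (x i * x j) * Real.cos ((inner ℝ ω (s i - s j) : ℝ)) := by
    intro x ω
    show (∑ i, x i * Real.cos ((inner ℝ ω (s i) : ℝ))) ^ 2 +
      (∑ i, x i * Real.sin ((inner ℝ ω (s i) : ℝ))) ^ 2
      = ∑ i, ∑ j, (x i * x j) * Real.cos ((inner ℝ ω (s i - s j) : ℝ))
    simp only [sq, Finset.sum_mul_sum, ← Finset.sum_add_distrib]
    refine Finset.sum_congr rfl fun i _ => Finset.sum_congr rfl fun j _ => ?_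
    rw [inner_sub_right, Real.cos_sub]
    ring
  -- quadratic form of R a
  have hquad : ∀ a, 0 < a → ∀ x : Fin n → ℝ,
      x ⬝ᵥ R a *ᵥ x = ∫ ω, T x ω * f a ω := by
    intro a ha x
    have e1 : x ⬝ᵥ R a *ᵥ x = ∑ i, ∑ j, (x i * x j) * R a i j := by
      simp only [dotProduct, Matrix.mulVec, Finset.mul_sum]
      exact Finset.sum_congr rfl fun i _ => Finset.sum_congr rfl fun j _ => by ring
    calc x ⬝ᵥ R a *ᵥ x
        = ∑ i, ∑ j, ∫ ω, (x i * x j) * (Real.cos ((inner ℝ ω (s i - s j) : ℝ)) * f a ω) := by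
          rw [e1]
          refine Finset.sum_congr rfl fun i _ => Finset.sum_congr rfl fun j _ => ?_
          rw [hR, integral_const_mul]
      _ = ∑ i, ∫ ω, ∑ j, (x i * x j) * (Real.cos ((inner ℝ ω (s i - s j) : ℝ)) * f a ω) := by
          refine Finset.sum_congr rfl fun i _ => ?_
          exact (integral_finset_sum _ fun j _ => (hfint a ha _).const_mul _).symm
      _ = ∫ ω, ∑ i, ∑ j, (x i * x j) * (Real.cos ((inner ℝ ω (s i - s j) : ℝ)) * f a ω) :=
          (integral_finset_sum _ fun i _ =>
            integrable_finset_sum _ fun j _ => (hfint a ha _).const_mul _).symm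
      _ = ∫ ω, T x ω * f a ω := by
          refine integral_congr_ae (Filter.Eventually.of_forall fun ω => ?_)
          show (∑ i, ∑ j, (x i * x j) * (Real.cos ((inner ℝ ω (s i - s j) : ℝ)) * f a ω))
            = T x ω * f a ω
          rw [trig x ω, Finset.sum_mul]
          refine Finset.sum_congr rfl fun i _ => ?_
          rw [Finset.sum_mul]
          exact Finset.sum_congr rfl fun j _ => by ring
  -- conclusion
  refine Matrix.PosDef.of_dotProduct_mulVec_pos ?_ ?_
  · have hsym : ∀ (a : ℝ), (R a).IsHermitian := by
      intro a
      refine Matrix.ext fun i j => ?_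
      rw [Matrix.conjTranspose_apply, star_trivial, hR, hR]
      congr 1
      funext ω
      have : (inner ℝ ω (s j - s i) : ℝ) = -(inner ℝ ω (s i - s j) : ℝ) := by
        rw [inner_sub_right, inner_sub_right]; ring
      rw [this, Real.cos_neg]
    have hsmul : ∀ (k : ℝ) (A : Matrix (Fin n) (Fin n) ℝ), A.IsHermitian →
        (k • A).IsHermitian := fun k A hA => by
      rw [Matrix.IsHermitian, Matrix.conjTranspose_smul, star_trivial, hA.eq]
    exact (hsmul _ _ (hsym α₁)).sub (hsmul _ _ (hsym α₂))
  · intro x hx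
    set h : EuclideanSpace ℝ (Fin d) → ℝ := fun ω => c * (g α₁ ω - g α₂ ω) with hhdef
    have hhpos : ∀ ω, 0 < h ω := by
      intro ω
      rw [hhdef]
      have : g α₂ ω < g α₁ ω := by
        rw [hgdef]
        refine Real.rpow_lt_rpow_of_neg (pos_base hα₁ ω) ?_ (by linarith)
        nlinarith
      simp only
      nlinarith
    have hhcont : Continuous h := by
      rw [hhdef]
      exact continuous_const.mul ((hgcont α₁ hα₁).sub (hgcont α₂ hα₂))
    have hTh_int : Integrable (fun ω => T x ω * h ω) := by
      refine (((hgint α₁ hα₁).const_mul (2 * (∑ i, |x i|) ^ 2 * c)).mono'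
        ((hTcont x).mul hhcont).aestronglyMeasurable ?_)
      refine Filter.Eventually.of_forall fun ω => ?_
      have h1 : 0 ≤ T x ω * h ω := mul_nonneg (hTnonneg x ω) (hhpos ω).le
      rw [Real.norm_eq_abs, abs_of_nonneg h1]
      have h2 : h ω ≤ c * g α₁ ω := by
        have := (hgpos α₂ hα₂ ω).le
        rw [hhdef]; simp only; nlinarith
      have h4 : 0 ≤ c * g α₁ ω := mul_nonneg hc.le (hgpos α₁ hα₁ ω).le
      calc T x ω * h ω ≤ T x ω * (c * g α₁ ω) :=
            mul_le_mul_of_nonneg_left h2 (hTnonneg x ω)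
        _ ≤ (2 * (∑ i, |x i|) ^ 2) * (c * g α₁ ω) :=
            mul_le_mul_of_nonneg_right (hTbd x ω) h4
        _ = 2 * (∑ i, |x i|) ^ 2 * c * g α₁ ω := by ring
    have hsum : x ⬝ᵥ (α₁ ^ (-(2 * ν)) • R α₁ - α₂ ^ (-(2 * ν)) • R α₂) *ᵥ x
        = ∫ ω, T x ω * h ω := by
      rw [Matrix.sub_mulVec, dotProduct_sub, Matrix.smul_mulVec,
        Matrix.smul_mulVec, dotProduct_smul, dotProduct_smul,
        smul_eq_mul, smul_eq_mul, hquad α₁ hα₁ x, hquad α₂ hα₂ x,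
        ← integral_const_mul, ← integral_const_mul,
        ← integral_sub ((hTfint α₁ hα₁ x).const_mul _) ((hTfint α₂ hα₂ x).const_mul _)]
      refine integral_congr_ae (Filter.Eventually.of_forall fun ω => ?_)
      have e₁ : α₁ ^ (-(2 * ν)) * α₁ ^ (2 * ν) = 1 := by
        rw [← Real.rpow_add hα₁]; norm_num
      have e₂ : α₂ ^ (-(2 * ν)) * α₂ ^ (2 * ν) = 1 := by
        rw [← Real.rpow_add hα₂]; norm_num
      simp only
      rw [hfe α₁ hα₁ ω, hfe α₂ hα₂ ω, hhdef]
      simp only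
      linear_combination (T x ω * c * g α₁ ω) * e₁ - (T x ω * c * g α₂ ω) * e₂
    have hnn : 0 ≤ ∫ ω, T x ω * h ω :=
      integral_nonneg fun ω => mul_nonneg (hTnonneg x ω) (hhpos ω).le
    have hne : (∫ ω, T x ω * h ω) ≠ 0 := by
      intro h0
      have hae : (fun ω => T x ω * h ω) =ᵐ[volume] 0 :=
        (integral_eq_zero_iff_of_nonneg
          (fun ω => mul_nonneg (hTnonneg x ω) (hhpos ω).le) hTh_int).mp h0
      have hae2 : (fun ω => T x ω * f α₁ ω) =ᵐ[volume] (fun _ => (0 : ℝ)) := by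
        filter_upwards [hae] with ω hω
        have h' : T x ω * h ω = 0 := hω
        have hT0 : T x ω = 0 := by
          rcases mul_eq_zero.mp h' with h'' | h''
          · exact h''
          · exact absurd h'' (ne_of_gt (hhpos ω))
        simp [hT0]
      have hz : x ⬝ᵥ R α₁ *ᵥ x = 0 := by
        rw [hquad α₁ hα₁ x, integral_congr_ae hae2]
        simp
      have hpos : 0 < x ⬝ᵥ R α₁ *ᵥ x := by simpa using hR₁.dotProduct_mulVec_pos hx
      linarith
    have hfin : 0 < x ⬝ᵥ (α₁ ^ (-(2 * ν)) • R α₁ - α₂ ^ (-(2 * ν)) • R α₂) *ᵥ x := by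
      rw [hsum]
      exact lt_of_le_of_ne hnn (Ne.symm hne)
    simpa using hfin

-- symmetric swap of dot product
lemma dot_symm {n : ℕ} {M : Matrix (Fin n) (Fin n) ℝ} (hM : M.IsHermitian)
    (u v : Fin n → ℝ) : u ⬝ᵥ (M *ᵥ v) = v ⬝ᵥ (M *ᵥ u) := by
  rw [dotProduct_mulVec u M v, ← Matrix.vecMul_transpose, dotProduct_comm]
  congr 1
  have : Mᵀ = M := by ext i j; rw [transpose_apply, ← hM.apply i j, star_trivial]
  rw [this]

lemma quadlt {n : ℕ} {A B : Matrix (Fin n) (Fin n) ℝ} (hA : A.PosDef) (hB : B.PosDef)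
    (hAB : (A - B).PosDef) (x : Fin n → ℝ) (hx : x ≠ 0) :
    x ⬝ᵥ A⁻¹ *ᵥ x < x ⬝ᵥ B⁻¹ *ᵥ x := by
  have hAdet : IsUnit A.det := isUnit_iff_ne_zero.mpr (ne_of_gt hA.det_pos)
  have hBdet : IsUnit B.det := isUnit_iff_ne_zero.mpr (ne_of_gt hB.det_pos)
  set y := A⁻¹ *ᵥ x with hy
  have hAy : A *ᵥ y = x := by
    rw [hy, Matrix.mulVec_mulVec, Matrix.mul_nonsing_inv _ hAdet, Matrix.one_mulVec]
  have hy0 : y ≠ 0 := by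
    intro h
    rw [h, Matrix.mulVec_zero] at hAy
    exact hx hAy.symm
  set z := B⁻¹ *ᵥ x - y with hz
  have hBz : B *ᵥ (B⁻¹ *ᵥ x) = x := by
    rw [Matrix.mulVec_mulVec, Matrix.mul_nonsing_inv _ hBdet, Matrix.one_mulVec]
  have hz2 : 0 ≤ z ⬝ᵥ (B *ᵥ z) := by
    have := hB.posSemidef.dotProduct_mulVec_nonneg z
    simpa using this
  have expand : z ⬝ᵥ (B *ᵥ z) = x ⬝ᵥ B⁻¹ *ᵥ x - 2 * (x ⬝ᵥ y) + y ⬝ᵥ (B *ᵥ y) := by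
    rw [hz, Matrix.mulVec_sub, hBz, sub_dotProduct, dotProduct_sub, dotProduct_sub]
    have h1 : (B⁻¹ *ᵥ x) ⬝ᵥ x = x ⬝ᵥ B⁻¹ *ᵥ x := dotProduct_comm _ _
    have h2 : (B⁻¹ *ᵥ x) ⬝ᵥ (B *ᵥ y) = x ⬝ᵥ y := by
      rw [dot_symm hB.isHermitian (B⁻¹ *ᵥ x) y, hBz, dotProduct_comm]
    have h3 : y ⬝ᵥ x = x ⬝ᵥ y := dotProduct_comm _ _
    rw [h1, h2, h3]; ring
  have hxy : x ⬝ᵥ y = y ⬝ᵥ (A *ᵥ y) := by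
    rw [← hAy, dotProduct_comm]
  have hxAx : x ⬝ᵥ A⁻¹ *ᵥ x = y ⬝ᵥ (A *ᵥ y) := hxy
  have hD : y ⬝ᵥ (B *ᵥ y) < y ⬝ᵥ (A *ᵥ y) := by
    have := hAB.dotProduct_mulVec_pos hy0
    simp only [star_trivial] at this
    rw [Matrix.sub_mulVec, dotProduct_sub] at this
    linarith
  nlinarith [hz2, expand, hxy, hxAx, hD]

open scoped MatrixOrder in
lemma detlt {n : ℕ} (hn : 0 < n) {A B : Matrix (Fin n) (Fin n) ℝ} (hA : A.PosDef)
    (hB : B.PosDef) (hAB : (A - B).PosDef) : B.det < A.det := by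
  classical
  set D := A - B with hD
  have hBsd := hB.posSemidef
  set S := CFC.sqrt B with hSdef
  have hSsd : S.PosSemidef := (CFC.sqrt_nonneg B).posSemidef
  have hSS : S * S = B := CFC.sqrt_mul_sqrt_self B hBsd.nonneg
  have hSdet : IsUnit S.det := by
    refine isUnit_iff_ne_zero.mpr fun h => ?_
    have : B.det = S.det * S.det := by rw [← hSS, det_mul]
    rw [h, mul_zero] at this
    exact ne_of_gt hB.det_pos this
  have hSinv : S * S⁻¹ = 1 := Matrix.mul_nonsing_inv _ hSdet
  have hSinv' : S⁻¹ * S = 1 := Matrix.nonsing_inv_mul _ hSdet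
  have hSherm : S⁻¹.IsHermitian := by
    have : Sᴴ = S := hSsd.isHermitian
    rw [Matrix.IsHermitian, Matrix.conjTranspose_nonsing_inv, this]
  set C := S⁻¹ * D * S⁻¹ with hC
  have hCpd : C.PosDef := by
    refine Matrix.PosDef.of_dotProduct_mulVec_pos ?_ ?_
    · have : C = (S⁻¹)ᴴ * D * S⁻¹ := by rw [hSherm.eq]
      rw [this]
      exact Matrix.isHermitian_conjTranspose_mul_mul _ hAB.isHermitian
    · intro x hx
      have hkey : star x ⬝ᵥ (C *ᵥ x) = star (S⁻¹ *ᵥ x) ⬝ᵥ (D *ᵥ (S⁻¹ *ᵥ x)) := by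
        rw [hC, ← Matrix.mulVec_mulVec, ← Matrix.mulVec_mulVec, star_mulVec,
          dotProduct_mulVec, dotProduct_mulVec,
          Matrix.conjTranspose_nonsing_inv, hSsd.isHermitian.eq]
        exact (Matrix.dotProduct_mulVec _ D _).symm
      rw [hkey]
      refine hAB.dotProduct_mulVec_pos fun h => hx ?_
      have : S *ᵥ (S⁻¹ *ᵥ x) = x := by
        rw [Matrix.mulVec_mulVec, hSinv, Matrix.one_mulVec]
      rw [h, Matrix.mulVec_zero] at this
      exact this.symm
  have hAeq : A = S * (1 + C) * S := by
    rw [mul_add, add_mul, mul_one, hSS, hC]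
    have : S * (S⁻¹ * D * S⁻¹) * S = D := by
      rw [← mul_assoc, ← mul_assoc, hSinv, one_mul, mul_assoc, hSinv', mul_one]
    rw [this, hD, add_sub_cancel]
  -- det (1 + C) > 1 via spectral theorem
  have hCh := hCpd.isHermitian
  set U := (hCh.eigenvectorUnitary : Matrix (Fin n) (Fin n) ℝ) with hU
  have hUU : U * star U = 1 := (Matrix.mem_unitaryGroup_iff).mp hCh.eigenvectorUnitary.2
  have h1C : 1 + C = U * (1 + diagonal (RCLike.ofReal ∘ hCh.eigenvalues)) * star U := by
    rw [mul_add, add_mul, mul_one, hUU]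
    congr 1
    exact hCh.spectral_theorem
  have hdet1C : (1 + C).det = ∏ i, (1 + hCh.eigenvalues i) := by
    rw [h1C, det_mul, det_mul, mul_comm U.det, mul_assoc, ← det_mul, hUU, det_one, mul_one]
    have : (1 : Matrix (Fin n) (Fin n) ℝ) + diagonal (RCLike.ofReal ∘ hCh.eigenvalues)
        = diagonal (fun i => 1 + hCh.eigenvalues i) := by
      rw [← Matrix.diagonal_one, Matrix.diagonal_add]
      rfl
    rw [this, det_diagonal]
  have hdetgt : 1 < (1 + C).det := by
    rw [hdet1C]
    have := Finset.prod_lt_prod_of_nonempty (f := fun _ : Fin n => (1:ℝ))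
      (g := fun i => 1 + hCh.eigenvalues i) (s := Finset.univ)
      (fun i _ => one_pos) (fun i _ => by
        have h : (0:ℝ) < hCh.eigenvalues i := hCpd.eigenvalues_pos i
        show (1:ℝ) < 1 + hCh.eigenvalues i
        linarith)
      (Finset.univ_nonempty_iff.mpr (Fin.pos_iff_nonempty.mp hn))
    simpa using this
  have hdetA : A.det = B.det * (1 + C).det := by
    rw [hAeq, det_mul, det_mul, mul_comm S.det, mul_assoc, mul_comm ((1+C).det), ← det_mul, hSS]
  rw [hdetA]
  nlinarith [hB.det_pos]


/-- Let `R α` be the Matérn correlation matrix at `n` distinct points in `ℝ^d`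
(`d ∈ {1,2,3}`), characterized spectrally by
`(R α)ᵢⱼ = ∫ cos(⟨ω, sᵢ − sⱼ⟩) f α ω dω` with `f α` the Matérn spectral density.
For `0 < α₁ < α₂`, the matrix `α₁^{−2ν} R α₁ − α₂^{−2ν} R α₂` is positive definite;
consequently for every nonzero `x`, `α₂^{2ν} xᵀR_{α₂}⁻¹x > α₁^{2ν} xᵀR_{α₁}⁻¹x`, and
`det(α₂^{2ν}R_{α₂}⁻¹) > det(α₁^{2ν}R_{α₁}⁻¹)`. -/
theorem stmt7 (d n : ℕ) (hd : d = 1 ∨ d = 2 ∨ d = 3) (hn : 0 < n) (ν : ℝ) (hν : 0 < ν)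
    (s : Fin n → EuclideanSpace ℝ (Fin d)) (hs : Function.Injective s)
    (α₁ α₂ : ℝ) (hα₁ : 0 < α₁) (hα : α₁ < α₂)
    (f : ℝ → EuclideanSpace ℝ (Fin d) → ℝ)
    (hf : ∀ a ω, f a ω = Real.Gamma (ν + (d : ℝ) / 2) / Real.Gamma ν * a ^ (2 * ν) /
        (Real.pi ^ ((d : ℝ) / 2) * (a ^ 2 + ‖ω‖ ^ 2) ^ (ν + (d : ℝ) / 2)))
    (R : ℝ → Matrix (Fin n) (Fin n) ℝ)
    (hR : ∀ a i j, R a i j = ∫ ω, Real.cos ((inner ℝ ω (s i - s j) : ℝ)) * f a ω)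
    (hR₁ : (R α₁).PosDef) (hR₂ : (R α₂).PosDef) :
    (α₁ ^ (-(2 * ν)) • R α₁ - α₂ ^ (-(2 * ν)) • R α₂).PosDef ∧
    (∀ x : Fin n → ℝ, x ≠ 0 →
      α₁ ^ (2 * ν) * (x ⬝ᵥ (R α₁)⁻¹ *ᵥ x) < α₂ ^ (2 * ν) * (x ⬝ᵥ (R α₂)⁻¹ *ᵥ x)) ∧
    (α₁ ^ (2 * ν) • (R α₁)⁻¹).det < (α₂ ^ (2 * ν) • (R α₂)⁻¹).det := by
  have hα₂ : 0 < α₂ := lt_trans hα₁ hα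
  have hMpd : (α₁ ^ (-(2 * ν)) • R α₁ - α₂ ^ (-(2 * ν)) • R α₂).PosDef :=
    matern_posdef hν s hα₁ hα f hf R hR hR₁
  have hsmulpd : ∀ (k : ℝ), 0 < k → ∀ {M : Matrix (Fin n) (Fin n) ℝ}, M.PosDef →
      (k • M).PosDef := by
    intro k hk M hM
    refine Matrix.PosDef.of_dotProduct_mulVec_pos ?_ ?_
    · rw [Matrix.IsHermitian, Matrix.conjTranspose_smul, star_trivial, hM.1.eq]
    · intro x hx
      rw [Matrix.smul_mulVec, dotProduct_smul, smul_eq_mul]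
      exact mul_pos hk (by simpa using hM.dotProduct_mulVec_pos hx)
  have hApd : (α₁ ^ (-(2 * ν)) • R α₁).PosDef :=
    hsmulpd _ (Real.rpow_pos_of_pos hα₁ _) hR₁
  have hBpd : (α₂ ^ (-(2 * ν)) • R α₂).PosDef :=
    hsmulpd _ (Real.rpow_pos_of_pos hα₂ _) hR₂
  have hinv : ∀ (a : ℝ), 0 < a → (R a).PosDef →
      (a ^ (-(2 * ν)) • R a)⁻¹ = a ^ (2 * ν) • (R a)⁻¹ := by
    intro a ha hRa
    refine Matrix.inv_eq_right_inv ?_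
    rw [Matrix.smul_mul, Matrix.mul_smul, smul_smul,
      Matrix.mul_nonsing_inv _ (isUnit_iff_ne_zero.mpr (ne_of_gt hRa.det_pos))]
    rw [← Real.rpow_add ha]
    norm_num
  have hinv₁ := hinv α₁ hα₁ hR₁
  have hinv₂ := hinv α₂ hα₂ hR₂
  refine ⟨hMpd, fun x hx => ?_, ?_⟩
  · have h := quadlt hApd hBpd hMpd x hx
    rw [hinv₁, hinv₂, Matrix.smul_mulVec, Matrix.smul_mulVec,
      dotProduct_smul, dotProduct_smul, smul_eq_mul, smul_eq_mul] at h
    exact h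
  · have h := detlt hn hApd hBpd hMpd
    rw [← hinv₁, ← hinv₂, Matrix.det_nonsing_inv, Matrix.det_nonsing_inv, Ring.inverse_eq_inv, Ring.inverse_eq_inv]
    exact inv_strictAnti₀ hBpd.det_pos h
end

section
/- Under the setup of the previous item, the matrix α₂^d R_{α₂} − α₁^d R_{α₁} is positive definite for 0 < α₁ < α₂; consequently α₂^{nd}·det(R_{α₂}) > α₁^{nd}·det(R_{α₁}) and for all x ∈ ℝⁿ, α₁^{−d} xᵀ R_{α₁}^{−1} x > α₂^{−d} xᵀ R_{α₂}^{−1} x. -/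
open MeasureTheory Matrix



lemma aux_symm_dot {m : Type*} [Fintype m] {A : Matrix m m ℝ} (hA : A.IsHermitian)
    (a b : m → ℝ) : a ⬝ᵥ A *ᵥ b = (A *ᵥ a) ⬝ᵥ b := by
  have hT : Aᵀ = A := by
    rw [← conjTranspose_eq_transpose_of_trivial, hA.eq]
  rw [dotProduct_mulVec]
  congr 1
  rw [← mulVec_transpose, hT]

lemma aux_inv_quad_lt {m : Type*} [Fintype m] [DecidableEq m] {A B : Matrix m m ℝ}
    (hA : A.PosDef) (hB : B.PosDef) (hD : (B - A).PosDef) {x : m → ℝ} (hx : x ≠ 0) :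
    x ⬝ᵥ B⁻¹ *ᵥ x < x ⬝ᵥ A⁻¹ *ᵥ x := by
  have hAdet : IsUnit A.det := isUnit_iff_ne_zero.mpr hA.det_pos.ne'
  have hBdet : IsUnit B.det := isUnit_iff_ne_zero.mpr hB.det_pos.ne'
  set u := A⁻¹ *ᵥ x with hu
  set v := B⁻¹ *ᵥ x with hv
  have hAu : A *ᵥ u = x := by
    rw [hu, mulVec_mulVec, Matrix.mul_nonsing_inv _ hAdet, one_mulVec]
  have hBv : B *ᵥ v = x := by
    rw [hv, mulVec_mulVec, Matrix.mul_nonsing_inv _ hBdet, one_mulVec]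
  have hv0 : v ≠ 0 := by
    intro h
    apply hx
    rw [← hBv, h, mulVec_zero]
  have h1 : 0 ≤ (u - v) ⬝ᵥ A *ᵥ (u - v) := by
    simpa using hA.posSemidef.dotProduct_mulVec_nonneg (u - v)
  have h2 : 0 < v ⬝ᵥ (B - A) *ᵥ v := by simpa using hD.dotProduct_mulVec_pos hv0
  have e1 : (u - v) ⬝ᵥ A *ᵥ (u - v)
      = u ⬝ᵥ x - v ⬝ᵥ x - v ⬝ᵥ x + v ⬝ᵥ A *ᵥ v := by
    rw [mulVec_sub, sub_dotProduct, dotProduct_sub, dotProduct_sub]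
    rw [hAu]
    have : u ⬝ᵥ A *ᵥ v = x ⬝ᵥ v := by rw [aux_symm_dot hA.isHermitian, hAu]
    rw [this, dotProduct_comm x v]
    ring
  have e2 : v ⬝ᵥ (B - A) *ᵥ v = v ⬝ᵥ x - v ⬝ᵥ A *ᵥ v := by
    rw [sub_mulVec, dotProduct_sub, hBv]
  have gx : x ⬝ᵥ B⁻¹ *ᵥ x = v ⬝ᵥ x := dotProduct_comm x v
  have gy : x ⬝ᵥ A⁻¹ *ᵥ x = u ⬝ᵥ x := dotProduct_comm x u
  rw [gx, gy]
  linarith [e1 ▸ h1, e2 ▸ h2]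

open scoped MatrixOrder in
lemma aux_det_lt {m : Type*} [Fintype m] [DecidableEq m] [Nonempty m] {A B : Matrix m m ℝ}
    (hA : A.PosDef) (hD : (B - A).PosDef) : A.det < B.det := by
  set D := B - A with hDdef
  have hBeq : B = A + D := by rw [hDdef]; abel
  have hS := hA.posSemidef
  set S := CFC.sqrt A with hSdef
  have hSS : S * S = A := CFC.sqrt_mul_sqrt_self A hS.nonneg
  have hSsd : S.PosSemidef := (CFC.sqrt_nonneg A).posSemidef
  have hSdet : IsUnit S.det := by
    refine isUnit_iff_ne_zero.mpr fun h => ?_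
    have : A.det = S.det * S.det := by rw [← hSS, det_mul]
    rw [h, mul_zero] at this
    exact hA.det_pos.ne' this
  have hSinv : S * S⁻¹ = 1 := Matrix.mul_nonsing_inv _ hSdet
  have hSinv' : S⁻¹ * S = 1 := Matrix.nonsing_inv_mul _ hSdet
  have hSih : (S⁻¹).IsHermitian := by
    unfold Matrix.IsHermitian
    rw [conjTranspose_nonsing_inv, hSsd.isHermitian.eq]
  set C := S⁻¹ * D * S⁻¹ with hCdef
  have hCpos : C.PosDef := by
    refine Matrix.PosDef.of_dotProduct_mulVec_pos ?_ ?_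
    · unfold Matrix.IsHermitian
      rw [hCdef, conjTranspose_mul, conjTranspose_mul, hSih.eq, hD.isHermitian.eq]
      rw [mul_assoc]
    · intro y hy
      have hySne : S⁻¹ *ᵥ y ≠ 0 := by
        intro h
        apply hy
        have : S *ᵥ (S⁻¹ *ᵥ y) = y := by rw [mulVec_mulVec, hSinv, one_mulVec]
        rw [h, mulVec_zero] at this
        exact this.symm
      have h3 := hD.dotProduct_mulVec_pos hySne
      simp only [star_trivial] at h3 ⊢
      calc (0:ℝ) < (S⁻¹ *ᵥ y) ⬝ᵥ D *ᵥ (S⁻¹ *ᵥ y) := h3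
        _ = y ⬝ᵥ C *ᵥ y := by
            rw [hCdef, ← mulVec_mulVec, ← mulVec_mulVec, aux_symm_dot hSih]
  have hH : (1 + C).IsHermitian := by
    unfold Matrix.IsHermitian
    rw [conjTranspose_add, hCpos.isHermitian.eq, conjTranspose_one]
  have heig : ∀ i, 1 < hH.eigenvalues i := by
    intro i
    have hw := hH.mulVec_eigenvectorBasis i
    set w : m → ℝ := ⇑(hH.eigenvectorBasis i) with hwdef
    have hw0 : w ≠ 0 := by
      have hne := hH.eigenvectorBasis.orthonormal.ne_zero i
      intro h
      apply hne
      ext j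
      exact congr_fun h j
    have hCw : C *ᵥ w = hH.eigenvalues i • w - w := by
      have h4 : C *ᵥ w = (1 + C) *ᵥ w - w := by
        rw [add_mulVec, one_mulVec]; abel
      rw [h4, hw]
    have hww : 0 < w ⬝ᵥ w := by
      have h0 : w ⬝ᵥ w ≠ 0 := fun h => hw0 (dotProduct_self_eq_zero.mp h)
      have h5 : 0 ≤ w ⬝ᵥ w := by
        simp only [dotProduct]
        exact Finset.sum_nonneg fun i _ => mul_self_nonneg _
      exact lt_of_le_of_ne h5 (Ne.symm h0)
    have h6 : 0 < w ⬝ᵥ C *ᵥ w := by simpa using hCpos.dotProduct_mulVec_pos hw0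
    rw [hCw, dotProduct_sub, dotProduct_smul, smul_eq_mul] at h6
    nlinarith
  have hdet1 : 1 < (1 + C).det := by
    have := hH.det_eq_prod_eigenvalues
    rw [this]
    have h7 : ∏ _i : m, (1:ℝ) < ∏ i, hH.eigenvalues i :=
      Finset.prod_lt_prod_of_nonempty (fun i _ => one_pos) (fun i _ => heig i)
        Finset.univ_nonempty
    simpa using h7
  have hB2 : B = S * (1 + C) * S := by
    have hSCS : S * C * S = D := by
      rw [hCdef, ← mul_assoc, ← mul_assoc, hSinv, one_mul, mul_assoc, hSinv', mul_one]
    rw [hBeq, mul_add, mul_one, add_mul, hSS, hSCS]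
  have : B.det = A.det * (1 + C).det := by
    rw [hB2, det_mul, det_mul, ← hSS, det_mul]
    ring
  rw [this]
  exact (lt_mul_iff_one_lt_right hA.det_pos).mpr hdet1

noncomputable def chara {d : ℕ} (u : EuclideanSpace ℝ (Fin d)) :
    Multiplicative (EuclideanSpace ℝ (Fin d)) →* ℂ where
  toFun ω := Complex.exp ((inner ℝ (Multiplicative.toAdd ω) u : ℝ) * Complex.I)
  map_one' := by
    simp [toAdd_one, inner_zero_left]
  map_mul' a b := by
    simp only [toAdd_mul, inner_add_left]
    push_cast
    rw [add_mul, Complex.exp_add]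

lemma chara_injective {d : ℕ} : Function.Injective (chara (d := d)) := by
  intro u u' h
  by_contra hne
  have hz0 : u - u' ≠ 0 := sub_ne_zero.mpr hne
  have hnz : ‖u - u'‖ ^ 2 ≠ 0 := pow_ne_zero 2 (norm_ne_zero_iff.mpr hz0)
  set w : EuclideanSpace ℝ (Fin d) := (Real.pi / ‖u - u'‖ ^ 2) • (u - u') with hw
  have hwz : (inner ℝ w (u - u') : ℝ) = Real.pi := by
    rw [hw, real_inner_smul_left, real_inner_self_eq_norm_sq]
    field_simp
  have heval : Complex.exp ((inner ℝ w u : ℝ) * Complex.I)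
      = Complex.exp ((inner ℝ w u' : ℝ) * Complex.I) := by
    have := congrArg (fun φ => φ (Multiplicative.ofAdd w)) h
    simpa [chara] using this
  rw [Complex.exp_eq_exp_iff_exists_int] at heval
  obtain ⟨k, hk⟩ := heval
  have hACC : (((inner ℝ w u : ℝ) : ℂ) - ((inner ℝ w u' : ℝ) : ℂ)) * Complex.I
      = ((k : ℂ) * (2 * (Real.pi : ℂ))) * Complex.I := by
    rw [sub_mul, hk]; ring
  have h5 := mul_right_cancel₀ Complex.I_ne_zero hACC
  have h6 : (inner ℝ w u : ℝ) - (inner ℝ w u' : ℝ) = (k : ℝ) * (2 * Real.pi) := by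
    exact_mod_cast h5
  have hsub : (inner ℝ w u : ℝ) - (inner ℝ w u' : ℝ) = Real.pi := by
    rw [← inner_sub_right]
    exact hwz
  have : Real.pi = (k : ℝ) * (2 * Real.pi) := by linarith
  have h2k : (2 * (k:ℝ) - 1) * Real.pi = 0 := by linarith
  rcases mul_eq_zero.mp h2k with h | h
  · have : (2 * k - 1 : ℤ) = 0 := by exact_mod_cast h
    omega
  · exact Real.pi_ne_zero h

lemma aux_exists_pos {d n : ℕ} (hd : 0 < d) (s : Fin n → EuclideanSpace ℝ (Fin d))
    (hs : Function.Injective s) {x : Fin n → ℝ} (hx : x ≠ 0) :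
    ∃ ω : EuclideanSpace ℝ (Fin d), ω ≠ 0 ∧
      0 < (∑ j, x j * Real.cos (inner ℝ ω (s j) : ℝ)) ^ 2
        + (∑ j, x j * Real.sin (inner ℝ ω (s j) : ℝ)) ^ 2 := by
  by_contra hcon
  push_neg at hcon
  have hzero : ∀ ω : EuclideanSpace ℝ (Fin d), ω ≠ 0 →
      (∑ j, x j * Real.cos (inner ℝ ω (s j) : ℝ)) = 0 ∧
      (∑ j, x j * Real.sin (inner ℝ ω (s j) : ℝ)) = 0 := by
    intro ω hω
    have h1 := hcon ω hω
    constructor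
    · nlinarith [sq_nonneg (∑ j, x j * Real.cos (inner ℝ ω (s j) : ℝ)),
        sq_nonneg (∑ j, x j * Real.sin (inner ℝ ω (s j) : ℝ))]
    · nlinarith [sq_nonneg (∑ j, x j * Real.cos (inner ℝ ω (s j) : ℝ)),
        sq_nonneg (∑ j, x j * Real.sin (inner ℝ ω (s j) : ℝ))]
  set F : EuclideanSpace ℝ (Fin d) → ℂ :=
    fun ω => ∑ j, (x j : ℂ) * Complex.exp ((inner ℝ ω (s j) : ℝ) * Complex.I) with hF
  have hFcont : Continuous F := by
    refine continuous_finset_sum _ fun j _ => continuous_const.mul ?_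
    exact Complex.continuous_exp.comp
      ((Complex.continuous_ofReal.comp
        ((continuous_id.inner continuous_const))).mul continuous_const)
  have hFzero : ∀ ω : EuclideanSpace ℝ (Fin d), ω ≠ 0 → F ω = 0 := by
    intro ω hω
    obtain ⟨hc, hsin⟩ := hzero ω hω
    have : F ω = ((∑ j, x j * Real.cos (inner ℝ ω (s j) : ℝ) : ℝ) : ℂ)
        + ((∑ j, x j * Real.sin (inner ℝ ω (s j) : ℝ) : ℝ) : ℂ) * Complex.I := by
      rw [hF]
      push_cast
      rw [Finset.sum_mul, ← Finset.sum_add_distrib]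
      refine Finset.sum_congr rfl fun j _ => ?_
      rw [Complex.exp_mul_I]
      push_cast [Complex.ofReal_cos, Complex.ofReal_sin]
      ring
    rw [this, hc, hsin]
    simp
  haveI : Nontrivial (EuclideanSpace ℝ (Fin d)) := by
    refine ⟨0, EuclideanSpace.single ⟨0, hd⟩ 1, fun h => ?_⟩
    have := congrArg (fun v : EuclideanSpace ℝ (Fin d) => v ⟨0, hd⟩) h
    simpa [EuclideanSpace.single_apply] using this
  haveI : Filter.NeBot (nhdsWithin (0 : EuclideanSpace ℝ (Fin d)) {(0 : EuclideanSpace ℝ (Fin d))}ᶜ) :=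
    Module.punctured_nhds_neBot ℝ _ _
  have hF0 : F = fun _ => 0 := by
    apply Continuous.ext_on (dense_compl_singleton (0 : EuclideanSpace ℝ (Fin d))) hFcont
      continuous_const
    intro ω hω
    exact hFzero ω hω
  have li : LinearIndependent ℂ fun j : Fin n => ⇑(chara (s j)) :=
    (linearIndependent_monoidHom (Multiplicative (EuclideanSpace ℝ (Fin d))) ℂ).comp
      (fun j => chara (s j)) (fun i j hij => hs (chara_injective hij))
  have hsum : ∑ j, (x j : ℂ) • ⇑(chara (s j)) = 0 := by
    funext ω
    have : F (Multiplicative.toAdd ω) = 0 := congrFun hF0 _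
    simpa [chara, hF] using this
  have hall := Fintype.linearIndependent_iff.mp li (fun j => (x j : ℂ)) hsum
  apply hx
  funext j
  have := hall j
  simpa using this

lemma aux_cont_base {d : ℕ} {a p : ℝ} (ha : 0 < a) (hp : 0 < p) :
    Continuous (fun ω : EuclideanSpace ℝ (Fin d) => ((a ^ 2 + ‖ω‖ ^ 2) ^ p)⁻¹) := by
  refine Continuous.inv₀ ?_ fun ω => (Real.rpow_pos_of_pos (by positivity) p).ne'
  exact (continuous_const.add (continuous_norm.pow 2)).rpow_const fun ω => Or.inr hp.le

lemma aux_integrable {d : ℕ} (hd : 0 < d) {a p : ℝ} (ha : 0 < a) (hp : (d : ℝ) < 2 * p) :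
    Integrable (fun ω : EuclideanSpace ℝ (Fin d) => ((a ^ 2 + ‖ω‖ ^ 2) ^ p)⁻¹) := by
  have hdp : (0 : ℝ) < (d : ℝ) := by exact_mod_cast hd
  have hp0 : 0 < p := by linarith
  set m := min a 1 with hm
  have hm0 : 0 < m := lt_min ha one_pos
  have hbig : (Module.finrank ℝ (EuclideanSpace ℝ (Fin d)) : ℝ) < 2 * p := by
    simpa [finrank_euclideanSpace] using hp
  have hint := (integrable_one_add_norm (E := EuclideanSpace ℝ (Fin d))
    (μ := volume) hbig).const_mul (((m ^ 2 / 2) ^ p)⁻¹)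
  refine hint.mono' ((aux_cont_base ha hp0).aestronglyMeasurable) ?_
  filter_upwards with ω
  have h1 : (1 + ‖ω‖) ^ 2 ≤ 2 * (1 + ‖ω‖ ^ 2) := by nlinarith [sq_nonneg (‖ω‖ - 1)]
  have hma : m ≤ a := min_le_left _ _
  have hm1 : m ≤ 1 := min_le_right _ _
  have h2 : m ^ 2 / 2 * (1 + ‖ω‖) ^ 2 ≤ a ^ 2 + ‖ω‖ ^ 2 := by
    have ha2 : m ^ 2 ≤ a ^ 2 := pow_le_pow_left₀ hm0.le hma 2
    have h12 : m ^ 2 ≤ 1 := by nlinarith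
    nlinarith [mul_le_mul_of_nonneg_left h1 (by positivity : (0:ℝ) ≤ m ^ 2 / 2),
      sq_nonneg ‖ω‖]
  have h3 : (m ^ 2 / 2 * (1 + ‖ω‖) ^ 2) ^ p ≤ (a ^ 2 + ‖ω‖ ^ 2) ^ p :=
    Real.rpow_le_rpow (by positivity) h2 hp0.le
  have h4 : (m ^ 2 / 2 * (1 + ‖ω‖) ^ 2) ^ p = (m ^ 2 / 2) ^ p * (1 + ‖ω‖) ^ (2 * p) := by
    rw [Real.mul_rpow (by positivity) (by positivity)]
    congr 1
    rw [← Real.rpow_natCast (1 + ‖ω‖) 2, ← Real.rpow_mul (by positivity)]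
    norm_num
  have hpos1 : 0 < (m ^ 2 / 2) ^ p * (1 + ‖ω‖) ^ (2 * p) := by
    apply mul_pos (Real.rpow_pos_of_pos (by positivity) p)
      (Real.rpow_pos_of_pos (by positivity) _)
  have h5 : ((a ^ 2 + ‖ω‖ ^ 2) ^ p)⁻¹ ≤ ((m ^ 2 / 2) ^ p * (1 + ‖ω‖) ^ (2 * p))⁻¹ := by
    apply inv_anti₀ hpos1
    rw [← h4]; exact h3
  have h6 : ((m ^ 2 / 2) ^ p * (1 + ‖ω‖) ^ (2 * p))⁻¹
      = ((m ^ 2 / 2) ^ p)⁻¹ * (1 + ‖ω‖) ^ (-(2 * p)) := by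
    rw [mul_inv, Real.rpow_neg (by positivity)]
  have hnn : (0 : ℝ) ≤ ((a ^ 2 + ‖ω‖ ^ 2) ^ p)⁻¹ := by positivity
  rw [Real.norm_eq_abs, abs_of_nonneg hnn]
  rw [← h6]
  exact h5

lemma aux_rw (d : ℕ) (ν a t : ℝ) (ha : 0 < a) (ht : 0 ≤ t) :
    a ^ d * (Real.Gamma (ν + (d : ℝ) / 2) / Real.Gamma ν * a ^ (2 * ν) /
      (Real.pi ^ ((d : ℝ) / 2) * (a ^ 2 + t) ^ (ν + (d : ℝ) / 2)))
    = (Real.Gamma (ν + (d : ℝ) / 2) / Real.Gamma ν / Real.pi ^ ((d : ℝ) / 2)) *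
      (a ^ 2 / (a ^ 2 + t)) ^ (ν + (d : ℝ) / 2) := by
  set p := ν + (d : ℝ) / 2 with hp
  have hden : 0 < a ^ 2 + t := by positivity
  have hpip : (0:ℝ) < Real.pi ^ ((d : ℝ) / 2) := Real.rpow_pos_of_pos Real.pi_pos _
  have hsq : (a : ℝ) ^ d * a ^ (2 * ν) = (a ^ 2) ^ p := by
    rw [← Real.rpow_natCast a d, ← Real.rpow_add ha, ← Real.rpow_natCast a 2,
      ← Real.rpow_mul ha.le]
    congr 1
    rw [hp]; push_cast; ring
  have hdiv : (a ^ 2 / (a ^ 2 + t)) ^ p = (a ^ 2) ^ p / (a ^ 2 + t) ^ p :=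
    Real.div_rpow (sq_nonneg a) hden.le p
  calc a ^ d * (Real.Gamma p / Real.Gamma ν * a ^ (2 * ν) /
        (Real.pi ^ ((d : ℝ) / 2) * (a ^ 2 + t) ^ p))
      = (Real.Gamma p / Real.Gamma ν / Real.pi ^ ((d : ℝ) / 2)) *
        ((a ^ d * a ^ (2 * ν)) / (a ^ 2 + t) ^ p) := by ring
    _ = (Real.Gamma p / Real.Gamma ν / Real.pi ^ ((d : ℝ) / 2)) *
        ((a ^ 2) ^ p / (a ^ 2 + t) ^ p) := by rw [hsq]
    _ = (Real.Gamma p / Real.Gamma ν / Real.pi ^ ((d : ℝ) / 2)) *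
        (a ^ 2 / (a ^ 2 + t)) ^ p := by rw [hdiv]

lemma aux_mono {d : ℕ} {ν α₁ α₂ : ℝ} (hν : 0 < ν) (h1 : 0 < α₁) (h12 : α₁ < α₂)
    {t : ℝ} (ht : 0 ≤ t) :
    α₁ ^ d * (Real.Gamma (ν + (d : ℝ) / 2) / Real.Gamma ν * α₁ ^ (2 * ν) /
      (Real.pi ^ ((d : ℝ) / 2) * (α₁ ^ 2 + t) ^ (ν + (d : ℝ) / 2)))
    ≤ α₂ ^ d * (Real.Gamma (ν + (d : ℝ) / 2) / Real.Gamma ν * α₂ ^ (2 * ν) /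
      (Real.pi ^ ((d : ℝ) / 2) * (α₂ ^ 2 + t) ^ (ν + (d : ℝ) / 2))) ∧
    (0 < t →
      α₁ ^ d * (Real.Gamma (ν + (d : ℝ) / 2) / Real.Gamma ν * α₁ ^ (2 * ν) /
        (Real.pi ^ ((d : ℝ) / 2) * (α₁ ^ 2 + t) ^ (ν + (d : ℝ) / 2)))
      < α₂ ^ d * (Real.Gamma (ν + (d : ℝ) / 2) / Real.Gamma ν * α₂ ^ (2 * ν) /
        (Real.pi ^ ((d : ℝ) / 2) * (α₂ ^ 2 + t) ^ (ν + (d : ℝ) / 2)))) := by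
  have h2 : 0 < α₂ := h1.trans h12
  rw [aux_rw d ν α₁ t h1 ht, aux_rw d ν α₂ t h2 ht]
  set p := ν + (d : ℝ) / 2 with hp
  have hppos : 0 < p := by
    have : (0:ℝ) ≤ (d : ℝ) / 2 := by positivity
    rw [hp]; linarith
  have hK : 0 < Real.Gamma p / Real.Gamma ν / Real.pi ^ ((d : ℝ) / 2) := by
    have := Real.Gamma_pos_of_pos hppos
    have := Real.Gamma_pos_of_pos hν
    have := Real.rpow_pos_of_pos Real.pi_pos ((d : ℝ) / 2)
    positivity
  have hd1 : 0 < α₁ ^ 2 + t := by positivity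
  have hd2 : 0 < α₂ ^ 2 + t := by positivity
  have hratio_le : α₁ ^ 2 / (α₁ ^ 2 + t) ≤ α₂ ^ 2 / (α₂ ^ 2 + t) := by
    rw [div_le_div_iff₀ hd1 hd2]
    nlinarith [mul_nonneg ht (by nlinarith : (0:ℝ) ≤ α₂ ^ 2 - α₁ ^ 2)]
  constructor
  · exact mul_le_mul_of_nonneg_left
      (Real.rpow_le_rpow (by positivity) hratio_le hppos.le) hK.le
  · intro htpos
    have hratio_lt : α₁ ^ 2 / (α₁ ^ 2 + t) < α₂ ^ 2 / (α₂ ^ 2 + t) := by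
      rw [div_lt_div_iff₀ hd1 hd2]
      nlinarith [mul_pos htpos (by nlinarith : (0:ℝ) < α₂ ^ 2 - α₁ ^ 2)]
    exact mul_lt_mul_of_pos_left
      (Real.rpow_lt_rpow (by positivity) hratio_lt hppos) hK

lemma aux_smul_posdef {m : Type*} [Fintype m] [DecidableEq m] {c : ℝ} (hc : 0 < c)
    {A : Matrix m m ℝ} (hA : A.PosDef) : (c • A).PosDef := by
  refine Matrix.PosDef.of_dotProduct_mulVec_pos ?_ ?_
  · unfold Matrix.IsHermitian
    rw [conjTranspose_smul, hA.isHermitian.eq, star_trivial]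
  · intro x hx
    have h := hA.dotProduct_mulVec_pos hx
    simp only [smul_mulVec, dotProduct_smul, smul_eq_mul] at *
    exact mul_pos hc h

/-- Under the Matérn setup (spectral characterization of `R α`), for `0 < α₁ < α₂`
the matrix `α₂^d R α₂ − α₁^d R α₁` is positive definite; consequently
`α₂^{nd}·det(R α₂) > α₁^{nd}·det(R α₁)` and for all nonzero `x`,
`α₁^{−d} xᵀR_{α₁}⁻¹x > α₂^{−d} xᵀR_{α₂}⁻¹x`. -/
theorem stmt8 (d n : ℕ) (hd : d = 1 ∨ d = 2 ∨ d = 3) (hn : 0 < n) (ν : ℝ) (hν : 0 < ν)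
    (s : Fin n → EuclideanSpace ℝ (Fin d)) (hs : Function.Injective s)
    (α₁ α₂ : ℝ) (hα₁ : 0 < α₁) (hα : α₁ < α₂)
    (f : ℝ → EuclideanSpace ℝ (Fin d) → ℝ)
    (hf : ∀ a ω, f a ω = Real.Gamma (ν + (d : ℝ) / 2) / Real.Gamma ν * a ^ (2 * ν) /
        (Real.pi ^ ((d : ℝ) / 2) * (a ^ 2 + ‖ω‖ ^ 2) ^ (ν + (d : ℝ) / 2)))
    (R : ℝ → Matrix (Fin n) (Fin n) ℝ)
    (hR : ∀ a i j, R a i j = ∫ ω, Real.cos ((inner ℝ ω (s i - s j) : ℝ)) * f a ω)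
    (hR₁ : (R α₁).PosDef) (hR₂ : (R α₂).PosDef) :
    (α₂ ^ d • R α₂ - α₁ ^ d • R α₁).PosDef ∧
    α₁ ^ (n * d) * (R α₁).det < α₂ ^ (n * d) * (R α₂).det ∧
    (∀ x : Fin n → ℝ, x ≠ 0 →
      α₂ ^ (-(d : ℝ)) * (x ⬝ᵥ (R α₂)⁻¹ *ᵥ x) < α₁ ^ (-(d : ℝ)) * (x ⬝ᵥ (R α₁)⁻¹ *ᵥ x)) := by
  have hd0 : 0 < d := by rcases hd with h | h | h <;> omega
  have hα₂ : 0 < α₂ := hα₁.trans hα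
  have hppos : 0 < ν + (d : ℝ) / 2 := by positivity
  have h2p : (d : ℝ) < 2 * (ν + (d : ℝ) / 2) := by linarith
  -- continuity of f a
  have hfrw : ∀ a : ℝ, f a = fun ω : EuclideanSpace ℝ (Fin d) =>
      (Real.Gamma (ν + (d : ℝ) / 2) / Real.Gamma ν * a ^ (2 * ν) / Real.pi ^ ((d : ℝ) / 2)) *
        ((a ^ 2 + ‖ω‖ ^ 2) ^ (ν + (d : ℝ) / 2))⁻¹ := by
    intro a
    funext ω
    rw [hf a ω, ← div_div, div_eq_mul_inv]
  have hfc : ∀ a : ℝ, 0 < a → Continuous (f a) := by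
    intro a ha
    rw [hfrw a]
    exact continuous_const.mul (aux_cont_base ha hppos)
  have hfi : ∀ a : ℝ, 0 < a → Integrable (f a) := by
    intro a ha
    rw [hfrw a]
    exact (aux_integrable hd0 ha h2p).const_mul _
  have hfnn : ∀ a : ℝ, 0 < a → ∀ ω, 0 ≤ f a ω := by
    intro a ha ω
    rw [hf a ω]
    have hG1 := Real.Gamma_pos_of_pos hppos
    have hG2 := Real.Gamma_pos_of_pos hν
    apply div_nonneg
    · exact mul_nonneg (div_nonneg hG1.le hG2.le) (Real.rpow_nonneg ha.le _)
    · positivity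
  -- integrability of cosine-weighted densities
  have hci : ∀ a : ℝ, 0 < a → ∀ u : EuclideanSpace ℝ (Fin d),
      Integrable (fun ω => Real.cos ((inner ℝ ω u : ℝ)) * f a ω) := by
    intro a ha u
    refine (hfi a ha).mono' ?_ ?_
    · exact ((Real.continuous_cos.comp (continuous_id.inner continuous_const)).mul
        (hfc a ha)).aestronglyMeasurable
    · filter_upwards with ω
      rw [Real.norm_eq_abs, abs_mul]
      calc |Real.cos ((inner ℝ ω u : ℝ))| * |f a ω| ≤ 1 * |f a ω| :=
            mul_le_mul_of_nonneg_right (Real.abs_cos_le_one _) (abs_nonneg _)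
        _ = f a ω := by rw [one_mul, abs_of_nonneg (hfnn a ha ω)]
  -- pointwise monotonicity
  have hmono : ∀ ω : EuclideanSpace ℝ (Fin d),
      α₁ ^ d * f α₁ ω ≤ α₂ ^ d * f α₂ ω ∧
        (ω ≠ 0 → α₁ ^ d * f α₁ ω < α₂ ^ d * f α₂ ω) := by
    intro ω
    have h := aux_mono (d := d) hν hα₁ hα (sq_nonneg ‖ω‖)
    rw [hf α₁ ω, hf α₂ ω]
    refine ⟨h.1, fun hω => h.2 ?_⟩
    have : ‖ω‖ ≠ 0 := norm_ne_zero_iff.mpr hω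
    positivity
  set g : EuclideanSpace ℝ (Fin d) → ℝ :=
    fun ω => α₂ ^ d * f α₂ ω - α₁ ^ d * f α₁ ω with hgdef
  have hgnn : ∀ ω, 0 ≤ g ω := fun ω => sub_nonneg.mpr (hmono ω).1
  have hgpos : ∀ ω : EuclideanSpace ℝ (Fin d), ω ≠ 0 → 0 < g ω :=
    fun ω hω => sub_pos.mpr ((hmono ω).2 hω)
  have hgi : Integrable g :=
    ((hfi α₂ hα₂).const_mul _).sub ((hfi α₁ hα₁).const_mul _)
  have hgc : Continuous g :=
    (continuous_const.mul (hfc α₂ hα₂)).sub (continuous_const.mul (hfc α₁ hα₁))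
  have hgci : ∀ u : EuclideanSpace ℝ (Fin d),
      Integrable (fun ω => Real.cos ((inner ℝ ω u : ℝ)) * g ω) := by
    intro u
    have h := ((hci α₂ hα₂ u).const_mul (α₂ ^ d)).sub ((hci α₁ hα₁ u).const_mul (α₁ ^ d))
    refine h.congr ?_
    filter_upwards with ω
    simp only [Pi.sub_apply, hgdef]
    ring
  set M := α₂ ^ d • R α₂ - α₁ ^ d • R α₁ with hMdef
  have hMentry : ∀ i j, M i j = ∫ ω, Real.cos ((inner ℝ ω (s i - s j) : ℝ)) * g ω := by
    intro i j
    rw [hMdef]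
    simp only [Matrix.sub_apply, Matrix.smul_apply, smul_eq_mul, hR]
    rw [← integral_const_mul, ← integral_const_mul,
      ← integral_sub ((hci α₂ hα₂ _).const_mul (α₂ ^ d)) ((hci α₁ hα₁ _).const_mul (α₁ ^ d))]
    congr 1
    funext ω
    simp only [hgdef]
    ring
  have hquad : ∀ x : Fin n → ℝ, x ⬝ᵥ M *ᵥ x
      = ∫ ω, ((∑ j, x j * Real.cos ((inner ℝ ω (s j) : ℝ))) ^ 2
          + (∑ j, x j * Real.sin ((inner ℝ ω (s j) : ℝ))) ^ 2) * g ω := by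
    intro x
    have hterm : ∀ i j : Fin n, Integrable
        (fun ω => (x i * x j) * (Real.cos ((inner ℝ ω (s i - s j) : ℝ)) * g ω)) :=
      fun i j => (hgci _).const_mul _
    calc x ⬝ᵥ M *ᵥ x = ∑ i, ∑ j, (x i * x j) * M i j := by
          simp only [dotProduct, Matrix.mulVec, Finset.mul_sum]
          exact Finset.sum_congr rfl fun i _ => Finset.sum_congr rfl fun j _ => by ring
      _ = ∑ i, ∑ j, ∫ ω, (x i * x j) * (Real.cos ((inner ℝ ω (s i - s j) : ℝ)) * g ω) := by
          refine Finset.sum_congr rfl fun i _ => Finset.sum_congr rfl fun j _ => ?_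
          rw [hMentry i j, integral_const_mul]
      _ = ∑ i, ∫ ω, ∑ j, (x i * x j) * (Real.cos ((inner ℝ ω (s i - s j) : ℝ)) * g ω) := by
          exact Finset.sum_congr rfl fun i _ =>
            (integral_finset_sum _ fun j _ => hterm i j).symm
      _ = ∫ ω, ∑ i, ∑ j, (x i * x j) * (Real.cos ((inner ℝ ω (s i - s j) : ℝ)) * g ω) :=
          (integral_finset_sum _ fun i _ =>
            integrable_finset_sum _ fun j _ => hterm i j).symm
      _ = ∫ ω, ((∑ j, x j * Real.cos ((inner ℝ ω (s j) : ℝ))) ^ 2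
          + (∑ j, x j * Real.sin ((inner ℝ ω (s j) : ℝ))) ^ 2) * g ω := by
          congr 1
          funext ω
          have hinner : ∀ i j : Fin n,
              (inner ℝ ω (s i - s j) : ℝ) = (inner ℝ ω (s i) : ℝ) - (inner ℝ ω (s j) : ℝ) :=
            fun i j => inner_sub_right _ _ _
          simp only [hinner, Real.cos_sub]
          rw [sq, sq, Finset.sum_mul_sum, Finset.sum_mul_sum, ← Finset.sum_add_distrib,
            Finset.sum_mul]
          refine Finset.sum_congr rfl fun i _ => ?_
          rw [← Finset.sum_add_distrib, Finset.sum_mul]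
          refine Finset.sum_congr rfl fun j _ => ?_
          ring
  have hposquad : ∀ x : Fin n → ℝ, x ≠ 0 → 0 < x ⬝ᵥ M *ᵥ x := by
    intro x hx
    rw [hquad x]
    set P : EuclideanSpace ℝ (Fin d) → ℝ :=
      fun ω => (∑ j, x j * Real.cos ((inner ℝ ω (s j) : ℝ))) ^ 2
        + (∑ j, x j * Real.sin ((inner ℝ ω (s j) : ℝ))) ^ 2 with hPdef
    have c1 : Continuous fun ω : EuclideanSpace ℝ (Fin d) =>
        ∑ j, x j * Real.cos ((inner ℝ ω (s j) : ℝ)) :=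
      continuous_finset_sum _ fun j _ => continuous_const.mul
        (Real.continuous_cos.comp (continuous_id.inner continuous_const))
    have c2 : Continuous fun ω : EuclideanSpace ℝ (Fin d) =>
        ∑ j, x j * Real.sin ((inner ℝ ω (s j) : ℝ)) :=
      continuous_finset_sum _ fun j _ => continuous_const.mul
        (Real.continuous_sin.comp (continuous_id.inner continuous_const))
    have hPc : Continuous P := (c1.pow 2).add (c2.pow 2)
    have hPnn : ∀ ω, 0 ≤ P ω := fun ω => add_nonneg (sq_nonneg _) (sq_nonneg _)
    have hPB : ∀ ω, P ω ≤ 2 * (∑ j, |x j|) ^ 2 := by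
      intro ω
      have hb : ∀ (c : Fin n → ℝ), (∀ j, |c j| ≤ 1) →
          |∑ j, x j * c j| ≤ ∑ j, |x j| := by
        intro c hc
        calc |∑ j, x j * c j| ≤ ∑ j, |x j * c j| := Finset.abs_sum_le_sum_abs _ _
          _ ≤ ∑ j, |x j| := Finset.sum_le_sum fun j _ => by
              rw [abs_mul]
              calc |x j| * |c j| ≤ |x j| * 1 :=
                    mul_le_mul_of_nonneg_left (hc j) (abs_nonneg _)
                _ = |x j| := mul_one _
      have hb1 := hb (fun j => Real.cos ((inner ℝ ω (s j) : ℝ)))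
        (fun j => Real.abs_cos_le_one _)
      have hb2 := hb (fun j => Real.sin ((inner ℝ ω (s j) : ℝ)))
        (fun j => Real.abs_sin_le_one _)
      have h1 := abs_le.mp hb1
      have h2 := abs_le.mp hb2
      simp only [hPdef]
      nlinarith [sq_nonneg (∑ j, |x j|)]
    have hPgi : Integrable (fun ω => P ω * g ω) := by
      refine ((hgi.const_mul (2 * (∑ j, |x j|) ^ 2)).mono'
        ((hPc.mul hgc).aestronglyMeasurable)) ?_
      filter_upwards with ω
      rw [Real.norm_eq_abs, Pi.mul_apply, abs_of_nonneg (mul_nonneg (hPnn ω) (hgnn ω))]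
      exact mul_le_mul_of_nonneg_right (hPB ω) (hgnn ω)
    rw [integral_pos_iff_support_of_nonneg
      (fun ω => mul_nonneg (hPnn ω) (hgnn ω)) hPgi]
    obtain ⟨ω₀, hω₀, hPω₀⟩ := aux_exists_pos hd0 s hs hx
    have hUopen : IsOpen ({ω : EuclideanSpace ℝ (Fin d) | P ω ≠ 0} ∩ {(0 : EuclideanSpace ℝ (Fin d))}ᶜ) :=
      (isOpen_compl_singleton.preimage hPc).inter isOpen_compl_singleton
    have hsub : ({ω : EuclideanSpace ℝ (Fin d) | P ω ≠ 0} ∩ {(0 : EuclideanSpace ℝ (Fin d))}ᶜ)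
        ⊆ Function.support fun ω => P ω * g ω := by
      rintro ω ⟨h1, h2⟩
      exact mul_ne_zero h1 (hgpos ω h2).ne'
    calc (0 : ENNReal) < volume ({ω : EuclideanSpace ℝ (Fin d) | P ω ≠ 0} ∩ {(0 : EuclideanSpace ℝ (Fin d))}ᶜ) :=
          hUopen.measure_pos volume ⟨ω₀, hPω₀.ne', hω₀⟩
      _ ≤ volume (Function.support fun ω => P ω * g ω) := measure_mono hsub
  have hMherm : M.IsHermitian := by
    refine Matrix.ext fun i j => ?_
    rw [Matrix.conjTranspose_apply, star_trivial, hMentry i j, hMentry j i]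
    congr 1
    funext ω
    rw [show s j - s i = -(s i - s j) from (neg_sub _ _).symm, inner_neg_right, Real.cos_neg]
  have hMpos : M.PosDef := .of_dotProduct_mulVec_pos hMherm fun x hx => by simpa using hposquad x hx
  have hApos : (α₁ ^ d • R α₁).PosDef := aux_smul_posdef (pow_pos hα₁ d) hR₁
  have hBpos : (α₂ ^ d • R α₂).PosDef := aux_smul_posdef (pow_pos hα₂ d) hR₂
  haveI : Nonempty (Fin n) := ⟨⟨0, hn⟩⟩
  refine ⟨hMpos, ?_, ?_⟩
  · have hdet := aux_det_lt hApos hMpos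
    have e : ∀ (α : ℝ) (A : Matrix (Fin n) (Fin n) ℝ),
        (α ^ d • A).det = α ^ (n * d) * A.det := by
      intro α A
      rw [Matrix.det_smul, Fintype.card_fin, ← pow_mul, mul_comm d n]
    rw [e α₁ (R α₁), e α₂ (R α₂)] at hdet
    exact hdet
  · intro x hx
    have hinv : ∀ (α : ℝ), 0 < α → ∀ (A : Matrix (Fin n) (Fin n) ℝ), A.PosDef →
        α ^ (-(d : ℝ)) * (x ⬝ᵥ A⁻¹ *ᵥ x) = x ⬝ᵥ (α ^ d • A)⁻¹ *ᵥ x := by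
      intro α hαp A hA
      have hdet : IsUnit A.det := isUnit_iff_ne_zero.mpr hA.det_pos.ne'
      have hcne : (α : ℝ) ^ d ≠ 0 := (pow_pos hαp d).ne'
      have hinv2 : (α ^ d • A)⁻¹ = (α ^ d)⁻¹ • A⁻¹ := by
        apply Matrix.inv_eq_right_inv
        rw [Matrix.smul_mul, Matrix.mul_smul, Matrix.mul_nonsing_inv _ hdet, smul_smul,
          mul_inv_cancel₀ hcne, one_smul]
      rw [hinv2, smul_mulVec, dotProduct_smul, smul_eq_mul]
      congr 1
      rw [← Real.rpow_natCast α d, ← Real.rpow_neg hαp.le]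
    rw [hinv α₂ hα₂ (R α₂) hR₂, hinv α₁ hα₁ (R α₁) hR₁]
    exact aux_inv_quad_lt hApos hBpos hMpos hx
end

section
/- The profile log-likelihood 𝓛̃ₙ(α) = −(n/2)·log(xᵀ R_α^{−1} x / n) − (1/2)·log det(R_α) for the Matérn model satisfies, for any 0 < α₁ < α₂ and any nonzero x ∈ ℝⁿ, (α₁/α₂)^{n(ν+d/2)} < exp{𝓛̃ₙ(α₂) − 𝓛̃ₙ(α₁)} < (α₂/α₁)^{n(ν+d/2)}. -/
open Matrix

section Aux

variable {m : Type*} [Fintype m] [DecidableEq m]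

open scoped MatrixOrder

lemma myPosDef_smul {c : ℝ} (hc : 0 < c) {M : Matrix m m ℝ} (hM : M.PosDef) :
    (c • M).PosDef := by
  have hMt : Mᵀ = M := by
    have := hM.1.eq
    rwa [conjTranspose_eq_transpose_of_trivial] at this
  refine PosDef.of_dotProduct_mulVec_pos (by rw [Matrix.IsHermitian, conjTranspose_smul]; simp [hMt]) fun x hx => ?_
  have := hM.dotProduct_mulVec_pos hx
  simp only [smul_mulVec, dotProduct_smul, smul_eq_mul]
  exact mul_pos hc this

lemma myPosDef_conj {M N : Matrix m m ℝ} (hM : M.PosDef) (hN : IsUnit N.det) :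
    (Nᵀ * M * N).PosDef := by
  refine PosDef.of_dotProduct_mulVec_pos ?_ ?_
  · rw [← conjTranspose_eq_transpose_of_trivial]
    exact isHermitian_conjTranspose_mul_mul N hM.1
  · intro x hx
    have hNx : N *ᵥ x ≠ 0 := by
      have hinj : Function.Injective (N.mulVec) := mulVec_injective_iff_isUnit.mpr
        ((isUnit_iff_isUnit_det N).mpr hN)
      intro h
      exact hx (hinj (by simpa using h))
    have := hM.dotProduct_mulVec_pos hNx
    simpa [← mulVec_mulVec, dotProduct_mulVec, vecMul_transpose] using this

lemma myQuadPos {M : Matrix m m ℝ} (hM : M.PosDef) {x : m → ℝ} (hx : x ≠ 0) :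
    0 < x ⬝ᵥ M *ᵥ x := by simpa using hM.dotProduct_mulVec_pos hx

/-- If `A - B` is positive definite (with `A, B` pos def) then
`xᵀ A⁻¹ x < xᵀ B⁻¹ x` for nonzero `x`. -/
lemma myInvQuadLt {A B : Matrix m m ℝ} (hA : A.PosDef) (hB : B.PosDef)
    (hAB : (A - B).PosDef) {x : m → ℝ} (hx : x ≠ 0) :
    x ⬝ᵥ A⁻¹ *ᵥ x < x ⬝ᵥ B⁻¹ *ᵥ x := by
  set y := A⁻¹ *ᵥ x with hy
  set w := B⁻¹ *ᵥ x with hw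
  have hAy : A *ᵥ y = x := by
    rw [hy, mulVec_mulVec, mul_nonsing_inv A hA.det_pos.ne'.isUnit, one_mulVec]
  have hBw : B *ᵥ w = x := by
    rw [hw, mulVec_mulVec, mul_nonsing_inv B hB.det_pos.ne'.isUnit, one_mulVec]
  have hy0 : y ≠ 0 := fun h => hx (by rw [← hAy, h, mulVec_zero])
  have hBsym : Bᵀ = B := by
    have := hB.1
    rwa [Matrix.IsHermitian, conjTranspose_eq_transpose_of_trivial] at this
  -- quadratic form facts
  have hq : y ⬝ᵥ B *ᵥ y < x ⬝ᵥ y := by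
    have h0 := myQuadPos hAB hy0
    have : y ⬝ᵥ (A - B) *ᵥ y = y ⬝ᵥ A *ᵥ y - y ⬝ᵥ B *ᵥ y := by
      simp [sub_mulVec, dotProduct_sub]
    rw [this, hAy] at h0
    have hc : y ⬝ᵥ x = x ⬝ᵥ y := dotProduct_comm y x
    linarith
  have hwBy : w ⬝ᵥ B *ᵥ y = x ⬝ᵥ y := by
    rw [dotProduct_mulVec, ← hBsym, vecMul_transpose, hBw]
  have hyBw : y ⬝ᵥ B *ᵥ w = y ⬝ᵥ x := by rw [hBw]
  have hwBw : w ⬝ᵥ B *ᵥ w = x ⬝ᵥ w := by rw [hBw, dotProduct_comm]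
  have hz : 0 ≤ (y - w) ⬝ᵥ B *ᵥ (y - w) := by
    simpa using hB.posSemidef.dotProduct_mulVec_nonneg (y - w)
  have expand : (y - w) ⬝ᵥ B *ᵥ (y - w) =
      y ⬝ᵥ B *ᵥ y - y ⬝ᵥ B *ᵥ w - w ⬝ᵥ B *ᵥ y + w ⬝ᵥ B *ᵥ w := by
    simp [mulVec_sub, dotProduct_sub, sub_dotProduct]
    ring
  have hc : y ⬝ᵥ x = x ⬝ᵥ y := dotProduct_comm y x
  have hxA : x ⬝ᵥ A⁻¹ *ᵥ x = x ⬝ᵥ y := rfl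
  have hxB : x ⬝ᵥ B⁻¹ *ᵥ x = x ⬝ᵥ w := rfl
  rw [hxA, hxB]
  rw [expand, hyBw, hwBy, hwBw, hc] at hz
  linarith

/-- If `P` is positive definite then `1 < det (1 + P)` (nonempty index type). -/
lemma myDetOneAdd [Nonempty m] {P : Matrix m m ℝ} (hP : P.PosDef) :
    1 < (1 + P).det := by
  have hspec := hP.1.spectral_theorem
  rw [Unitary.conjStarAlgAut_apply] at hspec
  set U : Matrix m m ℝ := (hP.1.eigenvectorUnitary : Matrix m m ℝ) with hU
  have hUU : U * star U = 1 := Matrix.mem_unitaryGroup_iff.mp hP.1.eigenvectorUnitary.2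
  have key : 1 + P = U * (1 + diagonal (RCLike.ofReal ∘ hP.1.eigenvalues)) * star U := by
    rw [mul_add, add_mul, mul_one, hUU, ← hspec]
  rw [key, det_mul_right_comm, hUU, one_mul, ← diagonal_one, diagonal_add, det_diagonal]
  have h1 : (1:ℝ) = ∏ _i : m, (1:ℝ) := by simp
  rw [h1]
  refine Finset.prod_lt_prod_of_nonempty (fun i _ => one_pos) (fun i _ => ?_) Finset.univ_nonempty
  have := hP.eigenvalues_pos i
  simp only [Pi.add_apply, Pi.one_apply, Function.comp_apply, RCLike.ofReal_real_eq_id, id]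
  linarith

/-- If `A - B` is positive definite and `B` is positive definite then `det B < det A`. -/
lemma myDetLt [Nonempty m] {A B : Matrix m m ℝ} (hB : B.PosDef)
    (hAB : (A - B).PosDef) : B.det < A.det := by
  set S := CFC.sqrt B with hSdef
  have hSps : S.PosSemidef := Matrix.nonneg_iff_posSemidef.mp (CFC.sqrt_nonneg B)
  have hSS : S * S = B := CFC.sqrt_mul_sqrt_self B (Matrix.nonneg_iff_posSemidef.mpr hB.posSemidef)
  have hdetS : S.det * S.det = B.det := by rw [← det_mul, hSS]
  have hdetS0 : S.det ≠ 0 := by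
    intro h
    rw [h, mul_zero] at hdetS
    exact hB.det_pos.ne' hdetS.symm
  have hSinv : S * S⁻¹ = 1 := mul_nonsing_inv S hdetS0.isUnit
  have hSinv' : S⁻¹ * S = 1 := nonsing_inv_mul S hdetS0.isUnit
  have hSsym : Sᵀ = S := by
    have := hSps.1
    rwa [Matrix.IsHermitian, conjTranspose_eq_transpose_of_trivial] at this
  have hSinvT : S⁻¹ᵀ = S⁻¹ := by rw [transpose_nonsing_inv, hSsym]
  -- P := S⁻¹ (A - B) S⁻¹ is pos def
  have hdetSinv : IsUnit (S⁻¹).det := S.isUnit_nonsing_inv_det hdetS0.isUnit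
  have hP : (S⁻¹ * (A - B) * S⁻¹).PosDef := by
    have := myPosDef_conj hAB hdetSinv
    rwa [hSinvT] at this
  set P := S⁻¹ * (A - B) * S⁻¹ with hPdef
  have hA' : A = S * (1 + P) * S := by
    rw [hPdef]
    rw [mul_add, add_mul, mul_one, hSS]
    have h5 : S * (S⁻¹ * (A - B) * S⁻¹) * S = A - B := by
      rw [← mul_assoc, ← mul_assoc, hSinv, one_mul, mul_assoc, hSinv', mul_one]
    rw [h5]
    abel
  calc B.det = S.det * 1 * S.det := by rw [mul_one, hdetS]
    _ < S.det * (1 + P).det * S.det := by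
        have h1 := myDetOneAdd hP
        have h2 : 0 < S.det * S.det := by rw [hdetS]; exact hB.det_pos
        nlinarith
    _ = A.det := by rw [hA', det_mul, det_mul]

end Aux

set_option maxHeartbeats 1000000 in
/-- The profile log-likelihood
`𝓛̃ₙ(α) = −(n/2)·log(xᵀR_α⁻¹x/n) − (1/2)·log det R_α` of the Matérn model satisfies,
for `0 < α₁ < α₂` and nonzero `x`,
`(α₁/α₂)^{n(ν+d/2)} < exp{𝓛̃ₙ(α₂) − 𝓛̃ₙ(α₁)} < (α₂/α₁)^{n(ν+d/2)}`.
The two positive-definiteness facts from the Matérn spectral analysis are assumed. -/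
theorem stmt9 (n : ℕ) (hn : 0 < n) (d : ℕ) (hd : d = 1 ∨ d = 2 ∨ d = 3) (ν : ℝ) (hν : 0 < ν)
    (α₁ α₂ : ℝ) (hα₁ : 0 < α₁) (hα : α₁ < α₂)
    (R₁ R₂ : Matrix (Fin n) (Fin n) ℝ) (hR₁ : R₁.PosDef) (hR₂ : R₂.PosDef)
    (hA : (α₂ ^ (2 * ν) • R₂⁻¹ - α₁ ^ (2 * ν) • R₁⁻¹).PosDef)
    (hdet : (α₁ ^ (2 * ν) • R₁⁻¹).det < (α₂ ^ (2 * ν) • R₂⁻¹).det)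
    (hB : (α₂ ^ d • R₂ - α₁ ^ d • R₁).PosDef)
    (x : Fin n → ℝ) (hx : x ≠ 0) :
    (α₁ / α₂) ^ ((n : ℝ) * (ν + (d : ℝ) / 2)) <
      Real.exp ((-((n : ℝ) / 2) * Real.log (x ⬝ᵥ R₂⁻¹ *ᵥ x / n) - (1 / 2) * Real.log R₂.det) -
        (-((n : ℝ) / 2) * Real.log (x ⬝ᵥ R₁⁻¹ *ᵥ x / n) - (1 / 2) * Real.log R₁.det)) ∧
    Real.exp ((-((n : ℝ) / 2) * Real.log (x ⬝ᵥ R₂⁻¹ *ᵥ x / n) - (1 / 2) * Real.log R₂.det) -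
        (-((n : ℝ) / 2) * Real.log (x ⬝ᵥ R₁⁻¹ *ᵥ x / n) - (1 / 2) * Real.log R₁.det)) <
      (α₂ / α₁) ^ ((n : ℝ) * (ν + (d : ℝ) / 2)) := by
  haveI : Nonempty (Fin n) := Fin.pos_iff_nonempty.mp hn
  have hα₂ : 0 < α₂ := hα₁.trans hα
  set q₁ := x ⬝ᵥ R₁⁻¹ *ᵥ x with hq₁def
  set q₂ := x ⬝ᵥ R₂⁻¹ *ᵥ x with hq₂def
  have hq₁ : 0 < q₁ := myQuadPos hR₁.inv hx
  have hq₂ : 0 < q₂ := myQuadPos hR₂.inv hx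
  have hd₁ : 0 < R₁.det := hR₁.det_pos
  have hd₂ : 0 < R₂.det := hR₂.det_pos
  have hα₁d : (0:ℝ) < α₁ ^ d := pow_pos hα₁ d
  have hα₂d : (0:ℝ) < α₂ ^ d := pow_pos hα₂ d
  have hα₁ν : (0:ℝ) < α₁ ^ (2*ν) := Real.rpow_pos_of_pos hα₁ _
  have hα₂ν : (0:ℝ) < α₂ ^ (2*ν) := Real.rpow_pos_of_pos hα₂ _
  -- (1) quadratic form inequality from hA
  have h1 : α₁ ^ (2*ν) * q₁ < α₂ ^ (2*ν) * q₂ := by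
    have h0 := myQuadPos hA hx
    have : x ⬝ᵥ (α₂ ^ (2 * ν) • R₂⁻¹ - α₁ ^ (2 * ν) • R₁⁻¹) *ᵥ x
        = α₂ ^ (2*ν) * q₂ - α₁ ^ (2*ν) * q₁ := by
      simp [sub_mulVec, dotProduct_sub, smul_mulVec, dotProduct_smul]
      rfl
    linarith [this ▸ h0]
  -- (2) determinant inequality from hdet
  have h2 : (α₁ ^ (2*ν)) ^ n * (R₁.det)⁻¹ < (α₂ ^ (2*ν)) ^ n * (R₂.det)⁻¹ := by
    have e1 : (α₁ ^ (2 * ν) • R₁⁻¹).det = (α₁ ^ (2*ν)) ^ n * (R₁.det)⁻¹ := by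
      rw [det_smul, det_nonsing_inv, Ring.inverse_eq_inv']
      simp
    have e2 : (α₂ ^ (2 * ν) • R₂⁻¹).det = (α₂ ^ (2*ν)) ^ n * (R₂.det)⁻¹ := by
      rw [det_smul, det_nonsing_inv, Ring.inverse_eq_inv']
      simp
    rwa [e1, e2] at hdet
  -- (3) quadratic form inequality from hB (via inverse monotonicity)
  have h3 : (α₂ ^ d)⁻¹ * q₂ < (α₁ ^ d)⁻¹ * q₁ := by
    have hA2 : (α₂ ^ d • R₂).PosDef := myPosDef_smul hα₂d hR₂
    have hB1 : (α₁ ^ d • R₁).PosDef := myPosDef_smul hα₁d hR₁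
    have h0 := myInvQuadLt hA2 hB1 hB hx
    letI : Invertible (α₂ ^ d : ℝ) := invertibleOfNonzero hα₂d.ne'
    letI : Invertible (α₁ ^ d : ℝ) := invertibleOfNonzero hα₁d.ne'
    rw [Matrix.inv_smul R₂ (α₂ ^ d) hR₂.det_pos.ne'.isUnit, Matrix.inv_smul R₁ (α₁ ^ d) hR₁.det_pos.ne'.isUnit] at h0
    simpa [smul_mulVec, dotProduct_smul, invOf_eq_inv] using h0
  -- (4) determinant inequality from hB
  have h4 : (α₁ ^ d) ^ n * R₁.det < (α₂ ^ d) ^ n * R₂.det := by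
    have hB1 : (α₁ ^ d • R₁).PosDef := myPosDef_smul hα₁d hR₁
    have h0 := myDetLt hB1 hB
    rwa [det_smul, det_smul, Fintype.card_fin] at h0
  -- translate to logarithms
  set Δ := Real.log α₂ - Real.log α₁ with hΔdef
  have hΔ : 0 < Δ := sub_pos.mpr (Real.log_lt_log hα₁ hα)
  have l1 : Real.log q₁ - Real.log q₂ < 2 * ν * Δ := by
    have := Real.log_lt_log (by positivity) h1
    rw [Real.log_mul hα₁ν.ne' hq₁.ne', Real.log_mul hα₂ν.ne' hq₂.ne',
      Real.log_rpow hα₁, Real.log_rpow hα₂] at this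
    rw [hΔdef]; nlinarith
  have l2 : Real.log R₁.det - Real.log R₂.det > -(2 * ν * n * Δ) := by
    have := Real.log_lt_log (by positivity) h2
    rw [Real.log_mul (by positivity) (by positivity),
      Real.log_mul (by positivity) (by positivity), Real.log_pow, Real.log_pow,
      Real.log_inv, Real.log_inv, Real.log_rpow hα₁, Real.log_rpow hα₂] at this
    rw [hΔdef]; nlinarith
  have l3 : Real.log q₁ - Real.log q₂ > -(d * Δ) := by
    have := Real.log_lt_log (by positivity) h3
    rw [Real.log_mul (by positivity) hq₂.ne', Real.log_mul (by positivity) hq₁.ne',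
      Real.log_inv, Real.log_inv, Real.log_pow, Real.log_pow] at this
    rw [hΔdef]; nlinarith
  have l4 : Real.log R₁.det - Real.log R₂.det < d * n * Δ := by
    have := Real.log_lt_log (by positivity) h4
    rw [Real.log_mul (by positivity) hd₁.ne', Real.log_mul (by positivity) hd₂.ne',
      Real.log_pow, Real.log_pow, Real.log_pow, Real.log_pow] at this
    rw [hΔdef]; nlinarith
  -- the difference of log-likelihoods
  have hn' : (0:ℝ) < n := Nat.cast_pos.mpr hn
  have hD : (-((n : ℝ) / 2) * Real.log (q₂ / n) - (1 / 2) * Real.log R₂.det) -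
      (-((n : ℝ) / 2) * Real.log (q₁ / n) - (1 / 2) * Real.log R₁.det)
      = (n / 2) * (Real.log q₁ - Real.log q₂)
        + (1 / 2) * (Real.log R₁.det - Real.log R₂.det) := by
    rw [Real.log_div hq₂.ne' hn'.ne', Real.log_div hq₁.ne' hn'.ne']
    ring
  rw [hD]
  set D := (n / 2 : ℝ) * (Real.log q₁ - Real.log q₂)
        + (1 / 2) * (Real.log R₁.det - Real.log R₂.det) with hDdef
  have hnhalf : (0:ℝ) < (n:ℝ) / 2 := by positivity
  have hhalf : (0:ℝ) < (1:ℝ) / 2 := by norm_num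
  have hDup : D < (n : ℝ) * (ν + (d : ℝ) / 2) * Δ := by
    rw [hDdef]
    nlinarith [mul_lt_mul_of_pos_left l1 hnhalf, mul_lt_mul_of_pos_left l4 hhalf]
  have hDlo : -((n : ℝ) * (ν + (d : ℝ) / 2) * Δ) < D := by
    rw [hDdef]
    nlinarith [mul_lt_mul_of_pos_left l3 hnhalf, mul_lt_mul_of_pos_left l2 hhalf]
  have hcpos : (0:ℝ) < (n : ℝ) * (ν + (d : ℝ) / 2) := by positivity
  constructor
  · rw [Real.rpow_def_of_pos (by positivity)]
    apply Real.exp_lt_exp.mpr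
    have e : Real.log (α₁ / α₂) * ((n : ℝ) * (ν + (d : ℝ) / 2))
        = -((n : ℝ) * (ν + (d : ℝ) / 2) * Δ) := by
      rw [Real.log_div hα₁.ne' hα₂.ne', hΔdef]; ring
    rw [e]
    exact hDlo
  · rw [Real.rpow_def_of_pos (by positivity)]
    apply Real.exp_lt_exp.mpr
    have e : Real.log (α₂ / α₁) * ((n : ℝ) * (ν + (d : ℝ) / 2))
        = (n : ℝ) * (ν + (d : ℝ) / 2) * Δ := by
      rw [Real.log_div hα₂.ne' hα₁.ne', hΔdef]; ring
    rw [e]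
    exact hDup
end

section
/- If Xₙ ~ N(0, σ₀²R_{α₀}) with R_{α₀} positive definite, and θ̃_{α₀} = α₀^{2ν}·XₙᵀR_{α₀}^{−1}Xₙ/n, θ₀ = σ₀²α₀^{2ν}, then for all sufficiently large n, P(√n·|θ̃_{α₀} − θ₀| > 4θ₀ log n) ≤ 2·exp(−(log n)²). -/
open MeasureTheory ProbabilityTheory Matrix
open scoped ENNReal NNReal

namespace Stmt12Aux

open Real

lemma pdf_smul_eq {t : ℝ} :
    (fun x : ℝ => (gaussianPDFReal 0 1 x).toNNReal • rexp (t * x ^ 2))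
      = fun x => (√(2 * π))⁻¹ * rexp (-(1/2 - t) * x ^ 2) := by
  ext x
  rw [NNReal.smul_def, smul_eq_mul, Real.coe_toNNReal _ (gaussianPDFReal_nonneg 0 1 x)]
  simp only [gaussianPDFReal, NNReal.coe_one, mul_one, sub_zero]
  rw [mul_assoc, ← Real.exp_add]
  congr 1
  ring

lemma chisq_int {t : ℝ} (ht : t < 1/2) :
    Integrable (fun x => rexp (t * x ^ 2)) (gaussianReal 0 1) := by
  rw [gaussianReal_of_var_ne_zero 0 one_ne_zero]
  have hmeas : Measurable (fun x : ℝ => (gaussianPDFReal 0 1 x).toNNReal) :=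
    (measurable_gaussianPDFReal 0 1).real_toNNReal
  have h0 : gaussianPDF 0 1 = fun x => ((gaussianPDFReal 0 1 x).toNNReal : ℝ≥0∞) := rfl
  rw [h0, integrable_withDensity_iff_integrable_smul hmeas]
  rw [pdf_smul_eq]
  exact (integrable_exp_neg_mul_sq (by linarith)).const_mul _

lemma chisq_mgf {t : ℝ} (ht : t < 1/2) :
    ∫ x, rexp (t * x ^ 2) ∂(gaussianReal 0 1) = (√(1 - 2*t))⁻¹ := by
  rw [gaussianReal_of_var_ne_zero 0 one_ne_zero]
  have hmeas : Measurable (fun x : ℝ => (gaussianPDFReal 0 1 x).toNNReal) :=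
    (measurable_gaussianPDFReal 0 1).real_toNNReal
  have h0 : gaussianPDF 0 1 = fun x => ((gaussianPDFReal 0 1 x).toNNReal : ℝ≥0∞) := rfl
  rw [h0, integral_withDensity_eq_integral_smul hmeas]
  rw [pdf_smul_eq, integral_const_mul, integral_gaussian]
  have hπ : (0:ℝ) < π := Real.pi_pos
  have h1 : (0:ℝ) < 1/2 - t := by linarith
  have h2 : (0:ℝ) < 1 - 2*t := by linarith
  rw [← Real.sqrt_inv, ← Real.sqrt_mul (by positivity), ← Real.sqrt_inv]
  congr 1
  field_simp

lemma quad_form_eq {n : ℕ} (B Rm : Matrix (Fin n) (Fin n) ℝ) (hR : Rm.PosDef)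
    (hAB : B * Bᵀ = Rm) (z : Fin n → ℝ) :
    (B *ᵥ z) ⬝ᵥ (Rm⁻¹ *ᵥ (B *ᵥ z)) = ∑ i, z i ^ 2 := by
  have hdet : IsUnit B.det := by
    have h1 : Rm.det = B.det * B.det := by rw [← hAB, det_mul, det_transpose]
    have h2 : Rm.det ≠ 0 := hR.det_pos.ne'
    exact isUnit_iff_ne_zero.mpr fun h => h2 (by rw [h1, h, mul_zero])
  have hdetT : IsUnit Bᵀ.det := by rwa [det_transpose]
  have hkey : Bᵀ * (Rm⁻¹ * B) = 1 := by
    rw [← hAB, Matrix.mul_inv_rev, ← Matrix.mul_assoc, ← Matrix.mul_assoc,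
      Matrix.mul_nonsing_inv Bᵀ hdetT, Matrix.one_mul, Matrix.nonsing_inv_mul B hdet]
  calc (B *ᵥ z) ⬝ᵥ (Rm⁻¹ *ᵥ (B *ᵥ z))
      = (B *ᵥ z) ⬝ᵥ ((Rm⁻¹ * B) *ᵥ z) := by rw [Matrix.mulVec_mulVec]
    _ = ((B *ᵥ z) ᵥ* (Rm⁻¹ * B)) ⬝ᵥ z := by rw [Matrix.dotProduct_mulVec]
    _ = ((z ᵥ* Bᵀ) ᵥ* (Rm⁻¹ * B)) ⬝ᵥ z := by rw [Matrix.vecMul_transpose]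
    _ = (z ᵥ* (Bᵀ * (Rm⁻¹ * B))) ⬝ᵥ z := by rw [Matrix.vecMul_vecMul]
    _ = z ⬝ᵥ z := by rw [hkey, Matrix.vecMul_one]
    _ = ∑ i, z i ^ 2 := by simp [dotProduct, sq]

lemma inv_sqrt_le_exp {t : ℝ} (h2 : t < 1/2) :
    (√(1 - 2*t))⁻¹ ≤ rexp (t / (1 - 2*t)) := by
  set c : ℝ := 1 - 2*t with hc
  have hcpos : 0 < c := by rw [hc]; linarith
  have hcne : c ≠ 0 := hcpos.ne'
  have hlog : -(2*t/c) ≤ Real.log c := by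
    have h := Real.log_le_sub_one_of_pos (inv_pos.mpr hcpos)
    rw [Real.log_inv] at h
    have heq : c⁻¹ - 1 = 2*t/c := by field_simp; rw [hc]; ring
    linarith [heq ▸ h]
  have hexp : rexp (-(2*t/c)) ≤ c :=
    (Real.exp_le_exp.mpr hlog).trans_eq (Real.exp_log hcpos)
  have hsq : rexp (-(t/c)) ≤ √c := by
    have h1 : rexp (-(t/c)) ^ 2 = rexp (-(2*t/c)) := by
      rw [sq, ← Real.exp_add]; ring_nf
    calc rexp (-(t/c)) = √(rexp (-(t/c)) ^ 2) := (Real.sqrt_sq (Real.exp_pos _).le).symm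
      _ = √(rexp (-(2*t/c))) := by rw [h1]
      _ ≤ √c := Real.sqrt_le_sqrt hexp
  calc (√c)⁻¹ ≤ (rexp (-(t/c)))⁻¹ := inv_anti₀ (Real.exp_pos _) hsq
    _ = rexp (t/c) := by rw [Real.exp_neg, inv_inv]

end Stmt12Aux

open Stmt12Aux

set_option maxHeartbeats 1600000 in
/-- If `Xₙ ~ N(0, σ₀²R_{α₀})` (realized as `Xₙ = σ₀·A·Z` with `A Aᵀ = R_{α₀}` and `Z`
i.i.d. standard normal), `θ̃_{α₀} = α₀^{2ν}·XₙᵀR_{α₀}⁻¹Xₙ/n` and `θ₀ = σ₀²α₀^{2ν}`,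
then for all sufficiently large `n`,
`P(√n·|θ̃_{α₀} − θ₀| > 4θ₀ log n) ≤ 2·exp(−(log n)²)`. -/
theorem stmt12 {Ω : Type*} [MeasureSpace Ω] [IsProbabilityMeasure (volume : Measure Ω)]
    (σ₀ α₀ ν : ℝ) (hσ₀ : 0 < σ₀) (hα₀ : 0 < α₀) (hν : 0 < ν)
    (R : (n : ℕ) → Matrix (Fin n) (Fin n) ℝ) (hR : ∀ n, (R n).PosDef)
    (A : (n : ℕ) → Matrix (Fin n) (Fin n) ℝ) (hA : ∀ n, A n * (A n)ᵀ = R n)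
    (Z : (n : ℕ) → Fin n → Ω → ℝ) (hmeas : ∀ n i, Measurable (Z n i))
    (hindep : ∀ n, iIndepFun (Z n) volume)
    (hlaw : ∀ n i, Measure.map (Z n i) volume = gaussianReal 0 1)
    (X : (n : ℕ) → Ω → Fin n → ℝ)
    (hX : ∀ n ω, X n ω = σ₀ • (A n *ᵥ fun i => Z n i ω)) :
    ∃ N : ℕ, ∀ n ≥ N,
      (volume {ω | 4 * (σ₀ ^ 2 * α₀ ^ (2 * ν)) * Real.log n <
          Real.sqrt n * |α₀ ^ (2 * ν) * (X n ω ⬝ᵥ (R n)⁻¹ *ᵥ X n ω) / n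
            - σ₀ ^ 2 * α₀ ^ (2 * ν)|}).toReal
        ≤ 2 * Real.exp (-(Real.log n) ^ 2) := by
  refine ⟨331776, fun n hn => ?_⟩
  -- basic quantities
  have hn' : (331776:ℝ) ≤ (n:ℝ) := by exact_mod_cast hn
  have hn1 : (1:ℝ) < (n:ℝ) := by linarith
  have hn0 : (0:ℝ) < (n:ℝ) := by linarith
  set L : ℝ := Real.log n with hLdef
  set r : ℝ := Real.sqrt n with hrdef
  have hL : 0 < L := Real.log_pos hn1
  have hr : 0 < r := Real.sqrt_pos.mpr hn0
  have hr2 : r ^ 2 = (n:ℝ) := Real.sq_sqrt hn0.le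
  -- log n ≤ √n / 6
  have hL6 : L ≤ r / 6 := by
    set a : ℝ := (n:ℝ) ^ ((4:ℝ)⁻¹) with hadef
    have ha0 : 0 < a := Real.rpow_pos_of_pos hn0 _
    have hLa : L = 4 * Real.log a := by
      rw [hadef, Real.log_rpow hn0]; ring
    have hla : Real.log a ≤ a := (Real.log_le_sub_one_of_pos ha0).trans (by linarith)
    have ha24 : (24:ℝ) ≤ a := by
      have h1 : ((331776:ℝ)) ^ ((4:ℝ)⁻¹) ≤ a :=
        Real.rpow_le_rpow (by norm_num) hn' (by norm_num)
      have h2 : ((331776:ℝ)) ^ ((4:ℝ)⁻¹) = 24 := by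
        rw [show (331776:ℝ) = (24:ℝ) ^ (4:ℕ) by norm_num, ← Real.rpow_natCast (24:ℝ) 4,
          ← Real.rpow_mul (by norm_num)]
        norm_num
      linarith [h2 ▸ h1]
    have hra : r = a ^ 2 := by
      rw [hrdef, hadef, ← Real.rpow_natCast ((n:ℝ) ^ ((4:ℝ)⁻¹)) 2, ← Real.rpow_mul hn0.le,
        Real.sqrt_eq_rpow]
      norm_num
    rw [hra]
    nlinarith
  -- the i.i.d. chi-square variables
  set Y : Fin n → Ω → ℝ := fun i ω => Z n i ω ^ 2 with hYdef
  have hYmeas : ∀ i, Measurable (Y i) := fun i => (hmeas n i).pow_const 2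
  have hYindep : iIndepFun Y volume :=
    (hindep n).comp (fun _ x => x ^ 2) (fun _ => measurable_id.pow_const 2)
  have hInt : ∀ u : ℝ, u < 1/2 → ∀ i, Integrable (fun ω => Real.exp (u * Y i ω)) volume := by
    intro u hu i
    have h := chisq_int hu
    rw [← hlaw n i] at h
    have hsm : AEStronglyMeasurable (fun x : ℝ => Real.exp (u * x ^ 2))
        (Measure.map (Z n i) volume) :=
      (((measurable_id.pow_const 2).const_mul u).exp).aestronglyMeasurable
    exact (integrable_map_measure hsm (hmeas n i).aemeasurable).mp h
  have hmgfY : ∀ u : ℝ, u < 1/2 → ∀ i, mgf (Y i) volume u = (Real.sqrt (1 - 2*u))⁻¹ := by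
    intro u hu i
    have h1 : mgf (Y i) volume u = ∫ ω, Real.exp (u * (Z n i ω) ^ 2) ∂volume := rfl
    have hsm : AEStronglyMeasurable (fun x : ℝ => Real.exp (u * x ^ 2))
        (Measure.map (Z n i) volume) :=
      (((measurable_id.pow_const 2).const_mul u).exp).aestronglyMeasurable
    have h2 : ∫ x, Real.exp (u * x ^ 2) ∂(Measure.map (Z n i) volume)
        = ∫ ω, Real.exp (u * (Z n i ω) ^ 2) ∂volume :=
      integral_map (hmeas n i).aemeasurable hsm
    rw [h1, ← h2, hlaw n i, chisq_mgf hu]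
  have hmgfsum : ∀ u : ℝ, u < 1/2 →
      mgf (∑ i, Y i) volume u ≤ Real.exp ((n:ℝ) * (u / (1 - 2*u))) := by
    intro u hu
    rw [hYindep.mgf_sum hYmeas Finset.univ]
    calc ∏ i : Fin n, mgf (Y i) volume u
        = ((Real.sqrt (1 - 2*u))⁻¹) ^ n := by
          simp [hmgfY u hu, Finset.prod_const, Finset.card_univ]
      _ ≤ (Real.exp (u / (1 - 2*u))) ^ n := by
          apply pow_le_pow_left₀ (by positivity) (inv_sqrt_le_exp hu)
      _ = Real.exp ((n:ℝ) * (u / (1 - 2*u))) := by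
          rw [← Real.exp_nat_mul]
  set u : ℝ := 4 * r * L with hudef
  -- upper tail
  have hup : (volume {ω : Ω | (n:ℝ) + u ≤ (∑ i, Y i) ω}).toReal ≤ Real.exp (-L^2) := by
    set t : ℝ := 3 * L / (4 * r) with htdef
    have ht0 : 0 < t := by positivity
    have htle : t ≤ 1/8 := by
      rw [htdef, div_le_iff₀ (by positivity)]
      nlinarith
    have ht2 : t < 1/2 := by linarith
    have hcher := measure_ge_le_exp_mul_mgf (μ := volume) (X := ∑ i, Y i) ((n:ℝ) + u) ht0.le
      (iIndepFun.integrable_exp_mul_sum hYindep hYmeas (fun i _ => hInt t ht2 i))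
    refine hcher.trans ?_
    calc Real.exp (-t * ((n:ℝ) + u)) * mgf (∑ i, Y i) volume t
        ≤ Real.exp (-t * ((n:ℝ) + u)) * Real.exp ((n:ℝ) * (t / (1 - 2*t))) := by
          exact mul_le_mul_of_nonneg_left (hmgfsum t ht2) (Real.exp_pos _).le
      _ = Real.exp (-t * ((n:ℝ) + u) + (n:ℝ) * (t / (1 - 2*t))) := by rw [← Real.exp_add]
      _ ≤ Real.exp (-L^2) := by
          apply Real.exp_le_exp.mpr
          have hfrac : t / (1 - 2*t) ≤ t + (8/3) * t^2 := by
            rw [div_le_iff₀ (by linarith)]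
            nlinarith
          have hmulf : (n:ℝ) * (t / (1 - 2*t)) ≤ (n:ℝ) * (t + (8/3) * t^2) :=
            mul_le_mul_of_nonneg_left hfrac hn0.le
          have h1 : t * u = 3 * L^2 := by
            rw [htdef, hudef]; field_simp
          have h2 : (n:ℝ) * t^2 = (9/16) * L^2 := by
            rw [← hr2, htdef]; field_simp; ring
          have hexp : -t * ((n:ℝ) + u) + (n:ℝ) * (t + (8/3) * t^2)
              = -(t*u) + (8/3) * ((n:ℝ) * t^2) := by ring
          clear_value t u L r
          linarith [sq_nonneg L]
  -- lower tail
  have hlow : (volume {ω : Ω | (∑ i, Y i) ω ≤ (n:ℝ) - u}).toReal ≤ Real.exp (-L^2) := by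
    set t : ℝ := -(L / r) with htdef
    have htpos : 0 < L / r := by positivity
    have ht0 : t ≤ 0 := by rw [htdef]; linarith
    have ht2 : t < 1/2 := by rw [htdef]; linarith
    have hcher := measure_le_le_exp_mul_mgf (μ := volume) (X := ∑ i, Y i) ((n:ℝ) - u) ht0
      (iIndepFun.integrable_exp_mul_sum hYindep hYmeas (fun i _ => hInt t ht2 i))
    refine hcher.trans ?_
    calc Real.exp (-t * ((n:ℝ) - u)) * mgf (∑ i, Y i) volume t
        ≤ Real.exp (-t * ((n:ℝ) - u)) * Real.exp ((n:ℝ) * (t / (1 - 2*t))) := by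
          exact mul_le_mul_of_nonneg_left (hmgfsum t ht2) (Real.exp_pos _).le
      _ = Real.exp (-t * ((n:ℝ) - u) + (n:ℝ) * (t / (1 - 2*t))) := by rw [← Real.exp_add]
      _ ≤ Real.exp (-L^2) := by
          apply Real.exp_le_exp.mpr
          have hden : 0 < 1 - 2*t := by linarith
          have hfrac : t / (1 - 2*t) ≤ t + 2 * t^2 := by
            rw [div_le_iff₀ hden]
            nlinarith
          have hmulf : (n:ℝ) * (t / (1 - 2*t)) ≤ (n:ℝ) * (t + 2 * t^2) :=
            mul_le_mul_of_nonneg_left hfrac hn0.le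
          have h1 : t * u = -(4 * L^2) := by
            rw [htdef, hudef]; field_simp
          have h2 : (n:ℝ) * t^2 = L^2 := by
            rw [← hr2, htdef]; field_simp
          have hexp : -t * ((n:ℝ) - u) + (n:ℝ) * (t + 2 * t^2)
              = t*u + 2 * ((n:ℝ) * t^2) := by ring
          clear_value t u L r
          linarith [sq_nonneg L]
  -- reduce the event
  have hq : ∀ ω, X n ω ⬝ᵥ (R n)⁻¹ *ᵥ X n ω = σ₀^2 * (∑ i, Y i) ω := by
    intro ω
    rw [hX n ω]
    rw [Matrix.mulVec_smul, smul_dotProduct, dotProduct_smul,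
      quad_form_eq (A n) (R n) (hR n) (hA n) (fun i => Z n i ω)]
    simp only [hYdef, Finset.sum_apply, smul_eq_mul]
    ring
  have hθ : 0 < σ₀^2 * α₀ ^ (2*ν) := by positivity
  have hsub : {ω : Ω | 4 * (σ₀ ^ 2 * α₀ ^ (2 * ν)) * Real.log n <
          Real.sqrt n * |α₀ ^ (2 * ν) * (X n ω ⬝ᵥ (R n)⁻¹ *ᵥ X n ω) / n
            - σ₀ ^ 2 * α₀ ^ (2 * ν)|} ⊆
      {ω : Ω | (n:ℝ) + u ≤ (∑ i, Y i) ω} ∪ {ω : Ω | (∑ i, Y i) ω ≤ (n:ℝ) - u} := by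
    intro ω hω
    simp only [Set.mem_setOf_eq] at hω
    rw [hq ω] at hω
    set d : ℝ := (∑ i, Y i) ω with hddef
    have habs : α₀ ^ (2*ν) * (σ₀^2 * d) / (n:ℝ) - σ₀^2 * α₀ ^ (2*ν)
        = (σ₀^2 * α₀ ^ (2*ν)) * ((d - (n:ℝ)) / (n:ℝ)) := by
      field_simp
    rw [habs, abs_mul, abs_of_pos hθ] at hω
    set m : ℝ := |(d - (n:ℝ)) / (n:ℝ)| with hmdef
    have hmval : r * m = |d - (n:ℝ)| / r := by
      rw [hmdef, abs_div, abs_of_pos hn0, ← hr2]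
      field_simp
    have hω2 : 4 * (σ₀^2 * α₀ ^ (2*ν)) * L < (σ₀^2 * α₀ ^ (2*ν)) * (|d - (n:ℝ)| / r) := by
      calc 4 * (σ₀^2 * α₀ ^ (2*ν)) * L < r * ((σ₀^2 * α₀ ^ (2*ν)) * m) := hω
        _ = (σ₀^2 * α₀ ^ (2*ν)) * (r * m) := by ring
        _ = (σ₀^2 * α₀ ^ (2*ν)) * (|d - (n:ℝ)| / r) := by rw [hmval]
    have hd : u < |d - (n:ℝ)| := by
      have h3 : (σ₀^2 * α₀ ^ (2*ν)) * (4 * L) < (σ₀^2 * α₀ ^ (2*ν)) * (|d - (n:ℝ)| / r) := by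
        linarith [hω2]
      have h4 : 4 * L < |d - (n:ℝ)| / r := (mul_lt_mul_iff_right₀ hθ).mp h3
      rw [lt_div_iff₀ hr] at h4
      rw [hudef]; linarith
    rcases lt_abs.mp hd with h | h
    · exact Or.inl (by simp only [Set.mem_setOf_eq]; linarith)
    · exact Or.inr (by simp only [Set.mem_setOf_eq]; linarith)
  -- union bound and conclusion
  have hAtop : volume {ω : Ω | (n:ℝ) + u ≤ (∑ i, Y i) ω} ≠ ⊤ := measure_ne_top _ _
  have hBtop : volume {ω : Ω | (∑ i, Y i) ω ≤ (n:ℝ) - u} ≠ ⊤ := measure_ne_top _ _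
  calc (volume {ω | 4 * (σ₀ ^ 2 * α₀ ^ (2 * ν)) * Real.log n <
          Real.sqrt n * |α₀ ^ (2 * ν) * (X n ω ⬝ᵥ (R n)⁻¹ *ᵥ X n ω) / n
            - σ₀ ^ 2 * α₀ ^ (2 * ν)|}).toReal
      ≤ ((volume {ω : Ω | (n:ℝ) + u ≤ (∑ i, Y i) ω})
          + volume {ω : Ω | (∑ i, Y i) ω ≤ (n:ℝ) - u}).toReal := by
        apply ENNReal.toReal_mono (ENNReal.add_ne_top.mpr ⟨hAtop, hBtop⟩)
        exact (measure_mono hsub).trans (measure_union_le _ _)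
    _ = (volume {ω : Ω | (n:ℝ) + u ≤ (∑ i, Y i) ω}).toReal
          + (volume {ω : Ω | (∑ i, Y i) ω ≤ (n:ℝ) - u}).toReal :=
        ENNReal.toReal_add hAtop hBtop
    _ ≤ Real.exp (-L^2) + Real.exp (-L^2) := add_le_add hup hlow
    _ = 2 * Real.exp (-(Real.log n)^2) := by rw [hLdef]; ring
end

section
/- Let p : (0,∞) → [0,∞) satisfy p(α) ≤ exp(−α^{δ₁}) for all α > n^{κ}, where δ₁ > 1/κ and κ ∈ (0,1/2) are constants, and let m > 0. Then for every c with m·κ > c > m/δ₁ and all sufficiently large n, ∫_{n^{κ}}^{∞} α^{n·m} p(α) dα ≤ exp(c·n·log n). -/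
open MeasureTheory

lemma key_rpow (t δ α : ℝ) (ht : 0 < t) (hδ : 0 < δ) (hα : 0 < α) :
    α ^ t ≤ Real.exp ((t / δ) * Real.log (2 * (t / δ)) + α ^ δ / 2) := by
  set s := t / δ with hs_def
  have hs : 0 < s := div_pos ht hδ
  have hy : (0:ℝ) < α ^ δ := Real.rpow_pos_of_pos hα δ
  rw [Real.rpow_def_of_pos hα, Real.exp_le_exp]
  have hlog : Real.log (α ^ δ) = δ * Real.log α := Real.log_rpow hα δ
  have ht' : t = s * δ := by rw [hs_def, div_mul_cancel₀ t hδ.ne']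
  have h1 : t * Real.log α = s * Real.log (α ^ δ) := by
    rw [hlog, ht']; ring
  rw [mul_comm (Real.log α) t, h1]
  have h2 : Real.log (α ^ δ) = Real.log (2 * s) + Real.log (α ^ δ / (2 * s)) := by
    rw [Real.log_div (ne_of_gt hy) (by positivity), Real.log_mul (by norm_num) (ne_of_gt hs)]
    ring
  rw [h2, mul_add]
  have h3 : Real.log (α ^ δ / (2 * s)) ≤ α ^ δ / (2 * s) - 1 :=
    Real.log_le_sub_one_of_pos (by positivity)
  have h4 : s * Real.log (α ^ δ / (2 * s)) ≤ α ^ δ / 2 := by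
    calc s * Real.log (α ^ δ / (2 * s)) ≤ s * (α ^ δ / (2 * s) - 1) := by
          exact mul_le_mul_of_nonneg_left h3 hs.le
      _ = α ^ δ / 2 - s := by field_simp
      _ ≤ α ^ δ / 2 := by linarith
  linarith

/-- Let `p : (0,∞) → [0,∞)` satisfy `p(α) ≤ exp(−α^{δ₁})` for all `α > n^{κ}`, with
`δ₁ > 1/κ`, `κ ∈ (0,1/2)` and `m > 0`. Then for every `c` with `m/δ₁ < c < m·κ` and all
sufficiently large `n`, `∫_{n^{κ}}^{∞} α^{n·m} p(α) dα ≤ exp(c·n·log n)`. -/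
theorem stmt14 (κ δ₁ m : ℝ) (hκ : κ ∈ Set.Ioo (0 : ℝ) (1 / 2)) (hδ : 1 / κ < δ₁)
    (hm : 0 < m) (p : ℝ → ℝ) (hpmeas : Measurable p) (hp0 : ∀ α, 0 < α → 0 ≤ p α)
    (hp : ∀ n : ℕ, ∀ α : ℝ, (n : ℝ) ^ κ < α → p α ≤ Real.exp (-(α ^ δ₁)))
    (c : ℝ) (hc₁ : m / δ₁ < c) (hc₂ : c < m * κ) :
    ∃ N : ℕ, ∀ n ≥ N,
      ∫ α in Set.Ioi ((n : ℝ) ^ κ), α ^ ((n : ℝ) * m) * p α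
        ≤ Real.exp (c * n * Real.log n) := by
  obtain ⟨hκ0, hκ2⟩ := hκ
  have hδ₁2 : 2 < δ₁ := lt_trans (by rw [lt_div_iff₀ hκ0]; linarith) hδ
  have hδ₁0 : 0 < δ₁ := by linarith
  have hcm : 0 < c - m / δ₁ := by linarith
  -- eventual facts
  have hev1 : ∀ᶠ n : ℕ in Filter.atTop, (1:ℝ) ≤ (n:ℝ) := by
    filter_upwards [Filter.eventually_ge_atTop 1] with n hn
    exact_mod_cast hn
  have hev2 : ∀ᶠ n : ℕ in Filter.atTop, (2:ℝ) ≤ (n:ℝ) ^ κ := by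
    have h := Filter.Tendsto.eventually_ge_atTop
      ((tendsto_rpow_atTop hκ0).comp tendsto_natCast_atTop_atTop) 2
    exact h
  have hev3 : ∀ᶠ n : ℕ in Filter.atTop,
      ((n:ℝ) * m / δ₁) * Real.log (2 * ((n:ℝ) * m / δ₁)) ≤ c * n * Real.log n := by
    have hinner : Filter.Tendsto (fun x : ℝ => (c - m / δ₁) * Real.log x - (m / δ₁) * Real.log (2 * (m / δ₁)))
        Filter.atTop Filter.atTop := by
      apply Filter.tendsto_atTop_add_const_right
      exact (Real.tendsto_log_atTop.const_mul_atTop hcm)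
    have hprod : Filter.Tendsto (fun x : ℝ => x * ((c - m / δ₁) * Real.log x - (m / δ₁) * Real.log (2 * (m / δ₁))))
        Filter.atTop Filter.atTop := Filter.Tendsto.atTop_mul_atTop₀ Filter.tendsto_id hinner
    have hge := (hprod.comp tendsto_natCast_atTop_atTop).eventually_ge_atTop 0
    filter_upwards [hge, Filter.eventually_ge_atTop 1] with n hn hn1
    have hn0 : (0:ℝ) < (n:ℝ) := by exact_mod_cast hn1
    have hlogeq : Real.log (2 * ((n:ℝ) * m / δ₁)) = Real.log n + Real.log (2 * (m / δ₁)) := by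
      have : 2 * ((n:ℝ) * m / δ₁) = (n:ℝ) * (2 * (m / δ₁)) := by ring
      rw [this, Real.log_mul (ne_of_gt hn0) (by positivity)]
    rw [hlogeq]
    have hn' : (0:ℝ) ≤ (n:ℝ) * ((c - m / δ₁) * Real.log n - (m / δ₁) * Real.log (2 * (m / δ₁))) := hn
    have hkey : (n:ℝ) * m / δ₁ * (Real.log n + Real.log (2 * (m / δ₁))) - c * n * Real.log n
        = -((n:ℝ) * ((c - m / δ₁) * Real.log n - (m / δ₁) * Real.log (2 * (m / δ₁)))) := by
      ring
    linarith
  obtain ⟨N, hN⟩ := Filter.eventually_atTop.mp (hev1.and (hev2.and hev3))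
  refine ⟨N, fun n hn => ?_⟩
  obtain ⟨hn1, hn2, hn3⟩ := hN n hn
  set a := (n:ℝ) ^ κ with ha_def
  have ha2 : (2:ℝ) ≤ a := hn2
  have ha0 : (0:ℝ) < a := by linarith
  set t := (n:ℝ) * m with ht_def
  have ht : 0 < t := by positivity
  set s := t / δ₁ with hs_def
  have hs : 0 < s := div_pos ht hδ₁0
  set K := Real.exp (s * Real.log (2 * s)) with hK_def
  have hK : 0 < K := Real.exp_pos _
  -- dominating function
  have hgint : IntegrableOn (fun α : ℝ => K * Real.exp (-α)) (Set.Ioi a) := by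
    have := exp_neg_integrableOn_Ioi a (b := 1) one_pos
    simpa [IntegrableOn] using this.const_mul K
  have hle : ∫ α in Set.Ioi a, α ^ t * p α ≤ ∫ α in Set.Ioi a, K * Real.exp (-α) := by
    apply integral_mono_of_nonneg
    · rw [Filter.EventuallyLE, ae_restrict_iff' measurableSet_Ioi]
      filter_upwards with α hα
      have hα0 : (0:ℝ) < α := lt_trans ha0 hα
      have := hp0 α hα0
      positivity
    · exact hgint
    · rw [Filter.EventuallyLE, ae_restrict_iff' measurableSet_Ioi]
      filter_upwards with α hα
      have hα0 : (0:ℝ) < α := lt_trans ha0 hα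
      have hα2 : (2:ℝ) ≤ α := le_of_lt (lt_of_le_of_lt ha2 hα)
      have hα1 : (1:ℝ) ≤ α := by linarith
      have hstep1 : α ^ t * p α ≤ α ^ t * Real.exp (-(α ^ δ₁)) := by
        apply mul_le_mul_of_nonneg_left (hp n α hα) (Real.rpow_nonneg hα0.le t)
      have hstep2 : α ^ t ≤ Real.exp (s * Real.log (2 * s) + α ^ δ₁ / 2) :=
        key_rpow t δ₁ α ht hδ₁0 hα0
      have hstep3 : α ≤ α ^ δ₁ / 2 := by
        have h1 : α ^ (2:ℝ) ≤ α ^ δ₁ := Real.rpow_le_rpow_of_exponent_le hα1 hδ₁2.le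
        have h2 : α ^ (2:ℝ) = α * α := by
          rw [show (2:ℝ) = ((2:ℕ):ℝ) by norm_num, Real.rpow_natCast]; ring
        have h3 : 2 * α ≤ α * α := by nlinarith
        rw [h2] at h1
        linarith
      calc α ^ t * p α ≤ Real.exp (s * Real.log (2 * s) + α ^ δ₁ / 2) * Real.exp (-(α ^ δ₁)) := by
            apply mul_le_mul hstep2 (hp n α hα) (hp0 α hα0) (Real.exp_pos _).le
        _ = K * Real.exp (α ^ δ₁ / 2 - α ^ δ₁) := by rw [hK_def, ← Real.exp_add, ← Real.exp_add]; congr 1; ring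
        _ ≤ K * Real.exp (-α) := by
            apply mul_le_mul_of_nonneg_left _ hK.le
            rw [Real.exp_le_exp]
            linarith
  have hcalc : ∫ α in Set.Ioi a, K * Real.exp (-α) = K * Real.exp (-a) := by
    rw [MeasureTheory.integral_const_mul, integral_exp_neg_Ioi]
  have hfinal : K * Real.exp (-a) ≤ Real.exp (c * n * Real.log n) := by
    calc K * Real.exp (-a) ≤ K * 1 := by
          apply mul_le_mul_of_nonneg_left _ hK.le
          exact Real.exp_le_one_iff.mpr (by linarith)
      _ = K := mul_one K
      _ ≤ Real.exp (c * n * Real.log n) := by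
          rw [hK_def, Real.exp_le_exp]; exact hn3
  calc ∫ α in Set.Ioi a, α ^ t * p α ≤ ∫ α in Set.Ioi a, K * Real.exp (-α) := hle
    _ = K * Real.exp (-a) := hcalc
    _ ≤ Real.exp (c * n * Real.log n) := hfinal
end

section
/- Suppose eigenvalues λ₁,…,λₙ ∈ (0, 1] satisfy λₖ ≥ (α₀/α)^{2ν+d} with α ≥ α₀, and Y₁,…,Yₙ are reals with ∑Yₖ² > 0. Then the quantity [(∑λₖ^{−1}Yₖ²/∑Yₖ²)·(∏λₖ)^{1/n}]^{−n/2} ≥ [1 + (∑(λₖ^{−1}−1)Yₖ²)/(∑Yₖ²)]^{−n/2}; in particular, if additionally ∑(λₖ^{−1}−1)Yₖ² ≤ n^{1/2−τ} and ∑Yₖ² ≥ n/2 for some τ ∈ (0,1/2), then this quantity is at least exp(−n^{1/2−τ}). -/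
/-- Suppose `λ₁,…,λₙ ∈ (0,1]` satisfy `λₖ ≥ (α₀/α)^{2ν+d}` with `α ≥ α₀ > 0`, and
`Y₁,…,Yₙ` are reals with `∑Yₖ² > 0`. Then
`[(∑λₖ⁻¹Yₖ²/∑Yₖ²)·(∏λₖ)^{1/n}]^{−n/2} ≥ [1 + (∑(λₖ⁻¹−1)Yₖ²)/(∑Yₖ²)]^{−n/2}`;
and if additionally `∑(λₖ⁻¹−1)Yₖ² ≤ n^{1/2−τ}` and `∑Yₖ² ≥ n/2` with `τ ∈ (0,1/2)`,
then this quantity is at least `exp(−n^{1/2−τ})`. -/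
theorem stmt18 (n : ℕ) (hn : 0 < n) (ν : ℝ) (hν : 0 < ν) (d : ℕ) (hd : 1 ≤ d)
    (α₀ α τ : ℝ) (hα₀ : 0 < α₀) (hαα : α₀ ≤ α) (hτ : τ ∈ Set.Ioo (0 : ℝ) (1 / 2))
    (lam Y : Fin n → ℝ) (hlam1 : ∀ k, lam k ≤ 1)
    (hlamlo : ∀ k, (α₀ / α) ^ (2 * ν + (d : ℝ)) ≤ lam k)
    (hY : 0 < ∑ k, Y k ^ 2) :
    (1 + (∑ k, ((lam k)⁻¹ - 1) * Y k ^ 2) / ∑ k, Y k ^ 2) ^ (-(n : ℝ) / 2)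
        ≤ ((∑ k, (lam k)⁻¹ * Y k ^ 2) / (∑ k, Y k ^ 2)
            * (∏ k, lam k) ^ ((1 : ℝ) / n)) ^ (-(n : ℝ) / 2) ∧
    ((∑ k, ((lam k)⁻¹ - 1) * Y k ^ 2 ≤ (n : ℝ) ^ ((1 : ℝ) / 2 - τ)
        ∧ (n : ℝ) / 2 ≤ ∑ k, Y k ^ 2) →
      Real.exp (-(n : ℝ) ^ ((1 : ℝ) / 2 - τ))
        ≤ ((∑ k, (lam k)⁻¹ * Y k ^ 2) / (∑ k, Y k ^ 2)
            * (∏ k, lam k) ^ ((1 : ℝ) / n)) ^ (-(n : ℝ) / 2)) := by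

  have hlampos : ∀ k, 0 < lam k := fun k =>
    lt_of_lt_of_le (Real.rpow_pos_of_pos (div_pos hα₀ (lt_of_lt_of_le hα₀ hαα)) _) (hlamlo k)
  have hinv : ∀ k, 1 ≤ (lam k)⁻¹ := fun k => (one_le_inv₀ (hlampos k)).mpr (hlam1 k)
  set T := ∑ k, Y k ^ 2 with hT
  set S := ∑ k, ((lam k)⁻¹ - 1) * Y k ^ 2 with hS
  have hSnn : 0 ≤ S := Finset.sum_nonneg fun k _ =>
    mul_nonneg (by linarith [hinv k]) (sq_nonneg _)
  have hsum : (∑ k, (lam k)⁻¹ * Y k ^ 2) = S + T := by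
    rw [hS, hT, ← Finset.sum_add_distrib]
    exact Finset.sum_congr rfl fun k _ => by ring
  have hBeq : (∑ k, (lam k)⁻¹ * Y k ^ 2) / T = 1 + S / T := by
    rw [hsum]; field_simp; ring
  have hB1 : (1 : ℝ) ≤ 1 + S / T := by
    have := div_nonneg hSnn hY.le; linarith
  have hBpos : (0 : ℝ) < 1 + S / T := lt_of_lt_of_le one_pos hB1
  have hPpos : (0 : ℝ) < (∏ k, lam k) ^ ((1 : ℝ) / n) :=
    Real.rpow_pos_of_pos (Finset.prod_pos fun k _ => hlampos k) _
  have hP1 : (∏ k, lam k) ^ ((1 : ℝ) / n) ≤ 1 :=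
    Real.rpow_le_one (Finset.prod_nonneg fun k _ => (hlampos k).le)
      (Finset.prod_le_one (fun k _ => (hlampos k).le) (fun k _ => hlam1 k))
      (by positivity)
  have hApos : 0 < (∑ k, (lam k)⁻¹ * Y k ^ 2) / T * (∏ k, lam k) ^ ((1 : ℝ) / n) := by
    rw [hBeq]; exact mul_pos hBpos hPpos
  have hAB : (∑ k, (lam k)⁻¹ * Y k ^ 2) / T * (∏ k, lam k) ^ ((1 : ℝ) / n)
      ≤ 1 + S / T := by
    rw [hBeq]
    calc (1 + S / T) * (∏ k, lam k) ^ ((1 : ℝ) / n) ≤ (1 + S / T) * 1 :=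
          mul_le_mul_of_nonneg_left hP1 hBpos.le
      _ = 1 + S / T := mul_one _
  have hexp : -(n : ℝ) / 2 ≤ 0 := by
    have : (0:ℝ) ≤ (n:ℝ) := Nat.cast_nonneg n
    linarith
  have part1 : (1 + S / T) ^ (-(n : ℝ) / 2)
      ≤ ((∑ k, (lam k)⁻¹ * Y k ^ 2) / T * (∏ k, lam k) ^ ((1 : ℝ) / n)) ^ (-(n : ℝ) / 2) :=
    Real.rpow_le_rpow_of_nonpos hApos hAB hexp
  refine ⟨part1, fun ⟨hSN, hTn⟩ => ?_⟩
  refine le_trans ?_ part1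
  set N := (n : ℝ) ^ ((1 : ℝ) / 2 - τ) with hN
  have hTpos : (0 : ℝ) < T := hY
  -- (1 + S/T)^(n/2) ≤ exp N
  have h1 : (1 + S / T) ≤ Real.exp (S / T) := by linarith [Real.add_one_le_exp (S / T)]
  have h2 : (1 + S / T) ^ ((n : ℝ) / 2) ≤ Real.exp (S / T) ^ ((n : ℝ) / 2) :=
    Real.rpow_le_rpow hBpos.le h1 (by positivity)
  have h3 : Real.exp (S / T) ^ ((n : ℝ) / 2) = Real.exp (S / T * ((n : ℝ) / 2)) := by
    rw [← Real.exp_mul]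
  have h4 : S / T * ((n : ℝ) / 2) ≤ N := by
    have hfrac : (n : ℝ) / 2 / T ≤ 1 := by
      rw [div_le_one hTpos]; exact hTn
    have : S / T * ((n : ℝ) / 2) = S * ((n : ℝ) / 2 / T) := by ring
    rw [this]
    calc S * ((n : ℝ) / 2 / T) ≤ S * 1 := mul_le_mul_of_nonneg_left hfrac hSnn
      _ = S := mul_one _
      _ ≤ N := hSN
  have h5 : (1 + S / T) ^ ((n : ℝ) / 2) ≤ Real.exp N :=
    h2.trans (by rw [h3]; exact Real.exp_le_exp.mpr h4)
  have hBhalfpos : 0 < (1 + S / T) ^ ((n : ℝ) / 2) := Real.rpow_pos_of_pos hBpos _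
  have : (1 + S / T) ^ (-(n : ℝ) / 2) = ((1 + S / T) ^ ((n : ℝ) / 2))⁻¹ := by
    rw [← Real.rpow_neg hBpos.le]; ring_nf
  rw [this, Real.exp_neg]
  exact inv_anti₀ hBhalfpos h5
end
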